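/- arXiv:1608.03002 — 3 statements merged into one kernel-verified Lean document; each statement's English description precedes it below -/
import Mathlib

section
/- (Domination Lemma, non-adjacent case) Let v, w be vertices of a graph G with v dominating w (i.e., N(w) ∪ {w, v} ⊆ N(v) ∪ {v, w}) and v not adjacent to w. Then the independence complex I_G is homotopy equivalent to I_{G−v}. -/
open scoped unitInterval

/-- The defining relation for the topological join of two spaces. -/
inductive JoinRel (X Y : Type*) :
    (X × Y × I) ⊕ (X ⊕ Y) → (X × Y × I) ⊕ (X ⊕ Y) → Prop
  | zero (x : X) (y : Y) : JoinRel X Y (.inl (x, y, 0)) (.inr (.inl x))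
  | one (x : X) (y : Y) : JoinRel X Y (.inl (x, y, 1)) (.inr (.inr y))

/-- The topological join `X * Y`. -/
def TopJoin (X Y : Type*) [TopologicalSpace X] [TopologicalSpace Y] : Type _ :=
  Quot (JoinRel X Y)

instance (X Y : Type*) [TopologicalSpace X] [TopologicalSpace Y] :
    TopologicalSpace (TopJoin X Y) := by
  unfold TopJoin; infer_instance

/-- The inclusion of the first factor into the join. -/
def TopJoin.inl {X Y : Type*} [TopologicalSpace X] [TopologicalSpace Y] (x : X) :
    TopJoin X Y :=
  Quot.mk _ (.inr (.inl x))

/-- The (unreduced) suspension, as the join with a two-point space. -/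
def Susp (X : Type*) [TopologicalSpace X] : Type _ := TopJoin X Bool

instance (X : Type*) [TopologicalSpace X] : TopologicalSpace (Susp X) :=
  inferInstanceAs (TopologicalSpace (TopJoin X Bool))

/-- The north pole of the suspension. -/
def suspApex (X : Type*) [TopologicalSpace X] : Susp X :=
  Quot.mk _ (.inr (.inr true))

/-- The wedge (one-point union) of two pointed spaces. -/
def Wedge (X Y : Type*) [TopologicalSpace X] [TopologicalSpace Y] (x0 : X) (y0 : Y) :
    Type _ :=
  Quot (fun a b : X ⊕ Y => a = Sum.inl x0 ∧ b = Sum.inr y0)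

instance (X Y : Type*) [TopologicalSpace X] [TopologicalSpace Y] (x0 : X) (y0 : Y) :
    TopologicalSpace (Wedge X Y x0 y0) := by
  unfold Wedge; infer_instance

/-- The wedge of a family of pointed spaces. -/
def WedgeFam {ι : Type*} (X : ι → Type*) [∀ i, TopologicalSpace (X i)]
    (pt : ∀ i, X i) : Type _ :=
  Quot (fun a b : Σ i, X i => ∃ i j, a = ⟨i, pt i⟩ ∧ b = ⟨j, pt j⟩)

instance {ι : Type*} (X : ι → Type*) [∀ i, TopologicalSpace (X i)] (pt : ∀ i, X i) :
    TopologicalSpace (WedgeFam X pt) := by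
  unfold WedgeFam; infer_instance

/-- The `k`-dimensional sphere. -/
abbrev nSphere (k : ℕ) : Type :=
  ↥(Metric.sphere (0 : EuclideanSpace ℝ (Fin (k + 1))) 1)

/-- A base point on the `k`-sphere. -/
noncomputable def sphereBase (k : ℕ) : nSphere k :=
  ⟨EuclideanSpace.single 0 1, by
    simp [EuclideanSpace.norm_single]⟩

/-- An abstract simplicial complex on a vertex set `V`. -/
structure AbsSimplicialComplex (V : Type*) where
  faces : Set (Finset V)
  down_closed : ∀ ⦃s⦄, s ∈ faces → ∀ ⦃t : Finset V⦄, t ⊆ s → t ∈ faces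

/-- The geometric realization of an abstract simplicial complex, as the space of
convex-combination weight functions supported on a face. -/
def AbsSimplicialComplex.space {V : Type*} (K : AbsSimplicialComplex V) : Type _ :=
  {f : V → ℝ // (∀ x, 0 ≤ f x) ∧
    ∃ s ∈ K.faces, (∀ x, x ∉ s → f x = 0) ∧ ∑ x ∈ s, f x = 1}

instance {V : Type*} (K : AbsSimplicialComplex V) : TopologicalSpace K.space := by
  unfold AbsSimplicialComplex.space; infer_instance

/-- The independence complex of a graph, restricted to vertices in `A`:
faces are the independent sets of `G` contained in `A`. -/
def indepComplexOn {V : Type*} (G : SimpleGraph V) (A : Set V) :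
    AbsSimplicialComplex V where
  faces := {s | ↑s ⊆ A ∧ ∀ a ∈ s, ∀ b ∈ s, ¬ G.Adj a b}
  down_closed := by
    intro s hs t ht
    exact ⟨fun x hx => hs.1 (ht hx), fun a ha b hb => hs.2 a (ht ha) b (ht hb)⟩

/-- The independence complex of a graph. -/
def indepComplex {V : Type*} (G : SimpleGraph V) : AbsSimplicialComplex V :=
  indepComplexOn G Set.univ

/-- The closed star of a vertex: the vertex together with its neighbors. -/
def stSet {V : Type*} (G : SimpleGraph V) (v : V) : Set V :=
  insert v (G.neighborSet v)

lemma indepComplexOn_mono {V : Type*} (G : SimpleGraph V) {A B : Set V} (h : A ⊆ B) :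
    (indepComplexOn G A).faces ⊆ (indepComplexOn G B).faces :=
  fun _ hs => ⟨fun x hx => h (hs.1 hx), hs.2⟩

/-- The inclusion of the realization of a subcomplex. -/
def inclMap {V : Type*} (K L : AbsSimplicialComplex V) (h : K.faces ⊆ L.faces) :
    C(K.space, L.space) where
  toFun := fun f => ⟨f.1, f.2.1, by
    obtain ⟨s, hs, h2⟩ := f.2.2
    exact ⟨s, h hs, h2⟩⟩
  continuous_toFun := Continuous.subtype_mk continuous_subtype_val _
/-- The cone over `K` with apex `v`, inside the same vertex set. -/
def coneAt {V : Type*} [DecidableEq V] (v : V) (K : AbsSimplicialComplex V) :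
    AbsSimplicialComplex V where
  faces := {s | s.erase v ∈ K.faces}
  down_closed := by
    intro s hs t ht
    exact K.down_closed hs (Finset.erase_subset_erase _ ht)

/-- The cone over `K` with a fresh apex vertex `none`. -/
def coneVertex {V : Type*} (K : AbsSimplicialComplex V) :
    AbsSimplicialComplex (Option V) where
  faces := {s | Finset.eraseNone s ∈ K.faces}
  down_closed := by
    intro s hs t ht
    refine K.down_closed hs ?_
    intro x hx
    rw [Finset.mem_eraseNone] at hx ⊢
    exact ht hx

/-- The join of two simplicial complexes on disjoint vertex sets. -/
def complexJoin {V W : Type*} (K : AbsSimplicialComplex V)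
    (L : AbsSimplicialComplex W) : AbsSimplicialComplex (V ⊕ W) where
  faces := {s | s.toLeft ∈ K.faces ∧ s.toRight ∈ L.faces}
  down_closed := by
    intro s hs t ht
    constructor
    · refine K.down_closed hs.1 ?_
      intro x hx; rw [Finset.mem_toLeft] at hx ⊢; exact ht hx
    · refine L.down_closed hs.2 ?_
      intro x hx; rw [Finset.mem_toRight] at hx ⊢; exact ht hx

/-- The disjoint union of two graphs. -/
def graphSum {V W : Type*} (G : SimpleGraph V) (H : SimpleGraph W) :
    SimpleGraph (V ⊕ W) where
  Adj a b :=
    match a, b with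
    | .inl x, .inl y => G.Adj x y
    | .inr x, .inr y => H.Adj x y
    | _, _ => False
  symm := ⟨by rintro (x | x) (y | y) h; exacts [G.adj_symm h, h.elim, h.elim, H.adj_symm h]⟩
  loopless := ⟨by rintro (x | x) h; exacts [G.irrefl h, H.irrefl h]⟩

/-- The subcomplex `A_u = I_{G - st(u)} * u` of the independence complex:
simplices `σ` with `σ ∪ {u}` independent. -/
def Afan {V : Type*} [DecidableEq V] (G : SimpleGraph V) (u : V) :
    AbsSimplicialComplex V where
  faces := {s | ∀ a ∈ insert u s, ∀ b ∈ insert u s, ¬ G.Adj a b}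
  down_closed := by
    intro s hs t ht a ha b hb
    exact hs a (Finset.insert_subset_insert u ht ha) b (Finset.insert_subset_insert u ht hb)

/-- The join of a complex with the full simplex on the vertex set `s`. -/
def joinSimplex {V : Type*} [DecidableEq V] (s : Finset V)
    (K : AbsSimplicialComplex V) : AbsSimplicialComplex V where
  faces := {t | t \ s ∈ K.faces}
  down_closed := by
    intro t ht r hr
    exact K.down_closed ht (Finset.sdiff_subset_sdiff hr (subset_refl s))

/-- The complex `K(G, v)` of Theorem 6.4: independent sets of `G - st(v)`
missing `W_u = lk(u) - v` entirely, for at least one neighbor `u` of `v`. -/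
def Kcomplex {V : Type*} (G : SimpleGraph V) (v : V) : AbsSimplicialComplex V where
  faces := {s | s ∈ (indepComplexOn G (stSet G v)ᶜ).faces ∧
      ∃ u, G.Adj v u ∧ ∀ w ∈ s, ¬ (G.Adj u w ∧ w ≠ v)}
  down_closed := by
    intro s hs t ht
    refine ⟨(indepComplexOn G (stSet G v)ᶜ).down_closed hs.1 ht, ?_⟩
    obtain ⟨u, hu, hw⟩ := hs.2
    exact ⟨u, hu, fun w hwt => hw w (ht hwt)⟩

/-- Auxiliary relation for subdividing the edge `uv` into a path of four edges
through three new vertices `0, 1, 2`. -/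
def sRel {V : Type*} (G : SimpleGraph V) (u v : V) :
    V ⊕ Fin 3 → V ⊕ Fin 3 → Prop
  | .inl x, .inl y => G.Adj x y ∧ ¬((x = u ∧ y = v) ∨ (x = v ∧ y = u))
  | .inl x, .inr i => (x = u ∧ i = 0) ∨ (x = v ∧ i = 2)
  | .inr i, .inr j => (i : ℕ) + 1 = (j : ℕ)
  | .inr _, .inl _ => False

/-- The graph obtained from `G` by replacing the edge `uv` by the path
`u - 0 - 1 - 2 - v` of four edges. -/
def subdivide4 {V : Type*} (G : SimpleGraph V) (u v : V) :
    SimpleGraph (V ⊕ Fin 3) where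
  Adj a b := sRel G u v a b ∨ sRel G u v b a
  symm := ⟨fun _ _ h => h.symm⟩
  loopless := ⟨by
    rintro (x | i) h
    · rcases h with h | h <;> exact G.irrefl h.1
    · rcases h with h | h <;> (simp only [sRel] at h; omega)⟩

lemma stSet_compl_subset {V : Type*} (G : SimpleGraph V) (v : V) :
    (stSet G v)ᶜ ⊆ ({v} : Set V)ᶜ :=
  Set.compl_subset_compl.mpr fun x hx => by
    rw [Set.mem_singleton_iff] at hx
    rw [hx]
    exact Set.mem_insert v _

/-- The inclusion of the realization of `I_{G - st(v)}` into that of `I_{G - v}`. -/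
def linkIncl {V : Type*} (G : SimpleGraph V) (v : V) :
    C((indepComplexOn G (stSet G v)ᶜ).space, (indepComplexOn G ({v} : Set V)ᶜ).space) :=
  inclMap _ _ (indepComplexOn_mono G (stSet_compl_subset G v))
section PushAux

variable {V : Type} [DecidableEq V]

/-- Push a `t`-fraction of the weight at `v` onto `w`. -/
def pushFunV (v w : V) (t : ℝ) (f : V → ℝ) : V → ℝ :=
  fun x => f x + t * f v * ((if x = w then (1:ℝ) else 0) - (if x = v then 1 else 0))

lemma pushFun_of_fv_eq_zero (v w : V) (t : ℝ) {f : V → ℝ} (h : f v = 0) :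
    pushFunV v w t f = f := by
  funext x; simp [pushFunV, h]

lemma pushFun_zero (v w : V) (f : V → ℝ) : pushFunV v w 0 f = f := by
  funext x; simp [pushFunV]

lemma pushFun_apply_v {v w : V} (hvw : v ≠ w) (t : ℝ) (f : V → ℝ) :
    pushFunV v w t f v = (1 - t) * f v := by
  simp [pushFunV, if_neg hvw]; ring

lemma pushFun_nonneg {v w : V} (hvw : v ≠ w) {t : ℝ} (ht0 : 0 ≤ t) (ht1 : t ≤ 1)
    {f : V → ℝ} (hf : ∀ x, 0 ≤ f x) (x : V) : 0 ≤ pushFunV v w t f x := by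
  by_cases hx : x = v
  · subst hx
    rw [pushFun_apply_v hvw]
    nlinarith [hf x]
  · by_cases hw : x = w
    · subst hw
      simp only [pushFunV, if_neg hx, if_pos rfl, ite_true, sub_zero, mul_one]
      nlinarith [hf x, hf v]
    · simp only [pushFunV, if_neg hx, if_neg hw]
      simpa using hf x

lemma sum_pushFun {v w : V} (s : Finset V) (hv : v ∈ s) (hw : w ∈ s)
    (t : ℝ) (f : V → ℝ) : ∑ x ∈ s, pushFunV v w t f x = ∑ x ∈ s, f x := by
  unfold pushFunV
  rw [Finset.sum_add_distrib, ← Finset.mul_sum, Finset.sum_sub_distrib,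
    Finset.sum_ite_eq' s w (fun _ => (1:ℝ)), Finset.sum_ite_eq' s v (fun _ => (1:ℝ))]
  simp [hv, hw]

lemma insert_indep {G : SimpleGraph V} {v w : V}
    (hdom : ∀ x, G.Adj w x → G.Adj v x ∨ x = v ∨ x = w)
    (hadj : ¬ G.Adj v w) {s : Finset V} (hv : v ∈ s)
    (hs : ∀ a ∈ s, ∀ b ∈ s, ¬ G.Adj a b) :
    ∀ a ∈ insert w s, ∀ b ∈ insert w s, ¬ G.Adj a b := by
  intro a ha b hb hab
  rw [Finset.mem_insert] at ha hb
  rcases ha with rfl | ha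
  · rcases hb with rfl | hb
    · exact G.irrefl hab
    · rcases hdom b hab with h | rfl | rfl
      · exact hs v hv b hb h
      · exact hadj hab.symm
      · exact G.irrefl hab
  · rcases hb with rfl | hb
    · rcases hdom a hab.symm with h | rfl | rfl
      · exact hs v hv a ha h
      · exact hadj hab
      · exact G.irrefl hab
    · exact hs a ha b hb hab

lemma push_mem_univ {G : SimpleGraph V} {v w : V} (hvw : v ≠ w)
    (hdom : ∀ x, G.Adj w x → G.Adj v x ∨ x = v ∨ x = w)
    (hadj : ¬ G.Adj v w) {f : V → ℝ}
    {s : Finset V} (hs : ∀ a ∈ s, ∀ b ∈ s, ¬ G.Adj a b)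
    (hsupp : ∀ x, x ∉ s → f x = 0) (hsum : ∑ x ∈ s, f x = 1) (t : ℝ) :
    ∃ s' ∈ (indepComplex G).faces,
      (∀ x, x ∉ s' → pushFunV v w t f x = 0) ∧ ∑ x ∈ s', pushFunV v w t f x = 1 := by
  by_cases hv : v ∈ s
  · refine ⟨insert w s, ⟨fun x _ => Set.mem_univ x, insert_indep hdom hadj hv hs⟩, ?_, ?_⟩
    · intro x hx
      have hxw : x ≠ w := fun h => hx (h ▸ Finset.mem_insert_self w s)
      have hxs : x ∉ s := fun h => hx (Finset.mem_insert_of_mem h)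
      have hxv : x ≠ v := fun h => hxs (h ▸ hv)
      simp [pushFunV, if_neg hxw, if_neg hxv, hsupp x hxs]
    · rw [sum_pushFun _ (Finset.mem_insert_of_mem hv) (Finset.mem_insert_self w s),
        ← Finset.sum_subset (Finset.subset_insert w s) (fun x _ hx => hsupp x hx)]
      exact hsum
  · have hfv : f v = 0 := hsupp v hv
    rw [pushFun_of_fv_eq_zero v w t hfv]
    exact ⟨s, ⟨fun x _ => Set.mem_univ x, hs⟩, hsupp, hsum⟩

lemma push_mem_compl {G : SimpleGraph V} {v w : V} (hvw : v ≠ w)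
    (hdom : ∀ x, G.Adj w x → G.Adj v x ∨ x = v ∨ x = w)
    (hadj : ¬ G.Adj v w) {f : V → ℝ}
    {s : Finset V} (hs : ∀ a ∈ s, ∀ b ∈ s, ¬ G.Adj a b)
    (hsupp : ∀ x, x ∉ s → f x = 0) (hsum : ∑ x ∈ s, f x = 1) :
    ∃ s' ∈ (indepComplexOn G ({v} : Set V)ᶜ).faces,
      (∀ x, x ∉ s' → pushFunV v w 1 f x = 0) ∧ ∑ x ∈ s', pushFunV v w 1 f x = 1 := by
  have hpv : pushFunV v w 1 f v = 0 := by rw [pushFun_apply_v hvw]; ring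
  by_cases hv : v ∈ s
  · refine ⟨(insert w s).erase v, ⟨?_, ?_⟩, ?_, ?_⟩
    · intro x hx
      simp only [Finset.coe_erase, Set.mem_diff, Finset.mem_coe] at hx
      simpa using hx.2
    · intro a ha b hb
      exact insert_indep hdom hadj hv hs a (Finset.mem_of_mem_erase ha)
        b (Finset.mem_of_mem_erase hb)
    · intro x hx
      by_cases hxv : x = v
      · subst hxv; exact hpv
      · have hxi : x ∉ insert w s := fun h => hx (Finset.mem_erase.mpr ⟨hxv, h⟩)
        have hxw : x ≠ w := fun h => hxi (h ▸ Finset.mem_insert_self w s)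
        have hxs : x ∉ s := fun h => hxi (Finset.mem_insert_of_mem h)
        simp [pushFunV, if_neg hxw, if_neg hxv, hsupp x hxs]
    · rw [Finset.sum_erase _ hpv,
        sum_pushFun _ (Finset.mem_insert_of_mem hv) (Finset.mem_insert_self w s),
        ← Finset.sum_subset (Finset.subset_insert w s) (fun x _ hx => hsupp x hx)]
      exact hsum
  · have hfv : f v = 0 := hsupp v hv
    rw [pushFun_of_fv_eq_zero v w 1 hfv]
    refine ⟨s, ⟨?_, hs⟩, hsupp, hsum⟩
    intro x hx
    simp only [Set.mem_compl_iff, Set.mem_singleton_iff]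
    rintro rfl; exact hv hx

end PushAux
/-- Domination Lemma, non-adjacent case: if `v` dominates `w` and `v`
is not adjacent to `w`, then `I_G ≃ I_{G−v}`. -/
theorem domination_nonadjacent {V : Type} [Fintype V] [DecidableEq V]
    (G : SimpleGraph V) (v w : V) (hvw : v ≠ w)
    (hdom : ∀ x, G.Adj w x → G.Adj v x ∨ x = v ∨ x = w)
    (hadj : ¬ G.Adj v w) :
    Nonempty (ContinuousMap.HomotopyEquiv (indepComplex G).space
      (indepComplexOn G ({v} : Set V)ᶜ).space) := by
  classical
  let r : C((indepComplex G).space, (indepComplexOn G ({v} : Set V)ᶜ).space) :=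
    ⟨fun f => ⟨pushFunV v w 1 f.1,
      fun x => pushFun_nonneg hvw zero_le_one le_rfl f.2.1 x, by
        obtain ⟨s, hsf, hsupp, hsum⟩ := f.2.2
        exact push_mem_compl hvw hdom hadj hsf.2 hsupp hsum⟩, by
      refine Continuous.subtype_mk ?_ _
      refine continuous_pi fun x => ?_
      exact ((continuous_apply x).comp continuous_subtype_val).add
        ((continuous_const.mul ((continuous_apply v).comp continuous_subtype_val)).mul
          continuous_const)⟩
  let i : C((indepComplexOn G ({v} : Set V)ᶜ).space, (indepComplex G).space) :=
    inclMap _ _ (indepComplexOn_mono G (Set.subset_univ _))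
  have hfv0 : ∀ g : (indepComplexOn G ({v} : Set V)ᶜ).space, g.1 v = 0 := by
    intro g
    obtain ⟨s, hsf, hsupp, -⟩ := g.2.2
    refine hsupp v fun hv => ?_
    exact (hsf.1 hv) rfl
  have hri : r.comp i = ContinuousMap.id _ := by
    refine ContinuousMap.ext fun g => Subtype.ext ?_
    show pushFunV v w 1 g.1 = g.1
    exact pushFun_of_fv_eq_zero v w 1 (hfv0 g)
  let H : ContinuousMap.Homotopy (ContinuousMap.id (indepComplex G).space) (i.comp r) :=
    { toFun := fun p => ⟨pushFunV v w p.1.1 p.2.1,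
        fun x => pushFun_nonneg hvw p.1.2.1 p.1.2.2 p.2.2.1 x, by
          obtain ⟨s, hsf, hsupp, hsum⟩ := p.2.2.2
          exact push_mem_univ hvw hdom hadj hsf.2 hsupp hsum p.1.1⟩
      continuous_toFun := by
        refine Continuous.subtype_mk ?_ _
        refine continuous_pi fun x => ?_
        have ht : Continuous fun p : I × (indepComplex G).space => (p.1 : ℝ) :=
          continuous_subtype_val.comp continuous_fst
        have hx : ∀ y : V, Continuous fun p : I × (indepComplex G).space => p.2.1 y :=
          fun y => (continuous_apply y).comp (continuous_subtype_val.comp continuous_snd)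
        exact (hx x).add ((ht.mul (hx v)).mul continuous_const)
      map_zero_left := fun f => Subtype.ext (by simp [pushFun_zero])
      map_one_left := fun f => Subtype.ext rfl }
  exact ⟨⟨r, i, ⟨H.symm⟩, hri ▸ ContinuousMap.Homotopic.refl _⟩⟩
end

section
/- Let T be a finite tree containing a vertex x such that the length of every path from x to a leaf is divisible by 3. Then the independence complex I_T is contractible. -/
open scoped unitInterval

set_option linter.unusedSectionVars false
set_option linter.unusedVariables false
set_option maxHeartbeats 1000000

namespace IndepProofAux

variable {V : Type} [Fintype V] [DecidableEq V]

lemma sum_eq_one_superset {f : V → ℝ} {t T : Finset V}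
    (h0 : ∀ x, x ∉ t → f x = 0) (h1 : ∑ x ∈ t, f x = 1)
    (hsub : ∀ w ∈ t, f w ≠ 0 → w ∈ T) : ∑ x ∈ T, f x = 1 := by
  have e1 : ∑ x ∈ T ∪ t, f x = ∑ x ∈ T, f x := by
    refine (Finset.sum_subset Finset.subset_union_left ?_).symm
    intro x hx hxT
    rcases Finset.mem_union.1 hx with h | h
    · exact absurd h hxT
    · by_contra hne; exact hxT (hsub x h hne)
  have e2 : ∑ x ∈ T ∪ t, f x = ∑ x ∈ t, f x := by
    refine (Finset.sum_subset Finset.subset_union_right ?_).symm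
    intro x hx hxt; exact h0 x hxt
  rw [← e1, e2, h1]

lemma le_one_of_face {f : V → ℝ} {t : Finset V} (hpos : ∀ x, 0 ≤ f x)
    (h0 : ∀ x, x ∉ t → f x = 0) (h1 : ∑ x ∈ t, f x = 1) (w : V) : f w ≤ 1 := by
  by_cases hw : w ∈ t
  · calc f w ≤ ∑ x ∈ t, f x := Finset.single_le_sum (fun i _ => hpos i) hw
      _ = 1 := h1
  · rw [h0 w hw]; exact zero_le_one

/-- The membership predicate of `AbsSimplicialComplex.space`. -/
def inSp (K : AbsSimplicialComplex V) (f : V → ℝ) : Prop :=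
  (∀ x, 0 ≤ f x) ∧ ∃ s ∈ K.faces, (∀ x, x ∉ s → f x = 0) ∧ ∑ x ∈ s, f x = 1

lemma coord_nonneg {K : AbsSimplicialComplex V} (f : K.space) (w : V) : 0 ≤ f.1 w := f.2.1 w

lemma coord_le_one {K : AbsSimplicialComplex V} (f : K.space) (w : V) : f.1 w ≤ 1 := by
  obtain ⟨hpos, s, hs, h0, h1⟩ := f.2
  exact le_one_of_face hpos h0 h1 w

noncomputable def dvert (v : V) : V → ℝ := fun w => if w = v then 1 else 0

lemma dvert_nonneg (v w : V) : 0 ≤ dvert v w := by unfold dvert; split <;> norm_num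

lemma dvert_le_one (v w : V) : dvert v w ≤ 1 := by unfold dvert; split <;> norm_num

lemma dvert_zero (v w : V) (h : w ≠ v) : dvert v w = 0 := if_neg h

lemma dvert_self (v : V) : dvert v v = 1 := if_pos rfl

lemma dvert_sum (v : V) : ∑ x ∈ {v}, dvert v x = 1 := by simp [dvert]

/-- Construct the point of the realization at a vertex. -/
noncomputable def dpt (G : SimpleGraph V) (A : Set V) (v : V) (hv : v ∈ A) :
    (indepComplexOn G A).space :=
  ⟨dvert v, fun x => dvert_nonneg v x,
    ⟨{v}, ⟨by simpa using hv, by intro a ha b hb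
                                 rw [Finset.mem_singleton] at ha hb
                                 subst ha; subst hb; exact G.irrefl⟩,
      fun x hx => dvert_zero v x (by simpa using hx), dvert_sum v⟩⟩

lemma eq_dvert_of_coord_one {K : AbsSimplicialComplex V} (f : K.space) (v : V)
    (h : f.1 v = 1) : f.1 = dvert v := by
  obtain ⟨hpos, s, hs, h0, h1⟩ := f.2
  have hvs : v ∈ s := by
    by_contra hc; rw [h0 v hc] at h; norm_num at h
  have hrest : ∑ x ∈ s.erase v, f.1 x = 0 := by
    have := Finset.add_sum_erase s f.1 hvs
    rw [h] at this; linarith [this.symm]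
  funext w
  by_cases hw : w = v
  · rw [hw, h, dvert_self]
  · rw [dvert_zero v w hw]
    by_cases hws : w ∈ s
    · exact (Finset.sum_eq_zero_iff_of_nonneg (fun i _ => hpos i)).1 hrest w
        (Finset.mem_erase.2 ⟨hw, hws⟩)
    · exact h0 w hws

/-- Convex combinations supported on a common face lie in the space. -/
lemma mixMem {G : SimpleGraph V} {A : Set V} {f g : V → ℝ} {a b : ℝ}
    (ha : 0 ≤ a) (hb : 0 ≤ b) (hab : a + b = 1) {s₁ s₂ : Finset V}
    (hfpos : ∀ x, 0 ≤ f x) (hf0 : ∀ x, x ∉ s₁ → f x = 0) (hf1 : ∑ x ∈ s₁, f x = 1)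
    (hgpos : ∀ x, 0 ≤ g x) (hg0 : ∀ x, x ∉ s₂ → g x = 0) (hg1 : ∑ x ∈ s₂, g x = 1)
    (hface : s₁ ∪ s₂ ∈ (indepComplexOn G A).faces) :
    inSp (indepComplexOn G A) (fun w => a * f w + b * g w) := by
  constructor
  · intro x; have := hfpos x; have := hgpos x; positivity
  · refine ⟨s₁ ∪ s₂, hface, ?_, ?_⟩
    · intro x hx
      show a * f x + b * g x = 0
      rw [hf0 x (fun hc => hx (Finset.mem_union_left _ hc)),
        hg0 x (fun hc => hx (Finset.mem_union_right _ hc))]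
      ring
    · rw [Finset.sum_add_distrib, ← Finset.mul_sum, ← Finset.mul_sum]
      rw [sum_eq_one_superset hf0 hf1 (fun w hw _ => Finset.mem_union_left _ hw),
        sum_eq_one_superset hg0 hg1 (fun w hw _ => Finset.mem_union_right _ hw)]
      linarith

noncomputable instance spaceMetric (K : AbsSimplicialComplex V) : MetricSpace K.space := by
  unfold AbsSimplicialComplex.space; infer_instance

/-- The realization of a complex on a finite vertex set is compact. -/
lemma compactSpace_space (K : AbsSimplicialComplex V) : CompactSpace K.space := by
  have hco : IsCompact {f : V → ℝ | inSp K f} := by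
    have heq : {f : V → ℝ | inSp K f} =
        ⋃ s ∈ K.faces, {f : V → ℝ | (∀ x, 0 ≤ f x) ∧ (∀ x, x ∉ s → f x = 0) ∧ ∑ x ∈ s, f x = 1} := by
      ext f
      simp only [Set.mem_setOf_eq, Set.mem_iUnion, inSp]
      tauto
    rw [heq]
    refine Set.Finite.isCompact_biUnion (Set.toFinite _) ?_
    intro s _
    refine IsCompact.of_isClosed_subset (isCompact_univ_pi (fun _ => (isCompact_Icc : IsCompact (Set.Icc (0:ℝ) 1)))) ?_ ?_
    · have h1 : IsClosed {f : V → ℝ | ∀ x, 0 ≤ f x} := by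
        have he : {f : V → ℝ | ∀ x, 0 ≤ f x} = ⋂ x, {f : V → ℝ | 0 ≤ f x} := by ext f; simp
        rw [he]
        exact isClosed_iInter fun x => isClosed_le continuous_const (continuous_apply x)
      have h2 : IsClosed {f : V → ℝ | ∀ x, x ∉ s → f x = 0} := by
        have he : {f : V → ℝ | ∀ x, x ∉ s → f x = 0} =
            ⋂ x ∈ {x | x ∉ s}, {f : V → ℝ | f x = 0} := by ext f; simp
        rw [he]
        exact isClosed_biInter fun x _ => isClosed_eq (continuous_apply x) continuous_const
      have h3 : IsClosed {f : V → ℝ | ∑ x ∈ s, f x = 1} :=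
        isClosed_eq (continuous_finset_sum _ fun i _ => continuous_apply i) continuous_const
      have he : {f : V → ℝ | (∀ x, 0 ≤ f x) ∧ (∀ x, x ∉ s → f x = 0) ∧ ∑ x ∈ s, f x = 1} =
          {f : V → ℝ | ∀ x, 0 ≤ f x} ∩ ({f : V → ℝ | ∀ x, x ∉ s → f x = 0} ∩
            {f : V → ℝ | ∑ x ∈ s, f x = 1}) := rfl
      rw [he]
      exact h1.inter (h2.inter h3)
    · intro f hf
      simp only [Set.mem_univ_pi, Set.mem_Icc]
      exact fun i => ⟨hf.1 i, le_one_of_face hf.1 hf.2.1 hf.2.2 i⟩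
  exact isCompact_iff_compactSpace.mp hco

section StepSec

variable {V : Type} [Fintype V] [DecidableEq V]

/-- Derivations of contractibility by repeatedly removing closed stars. -/
inductive GoodSet (G : SimpleGraph V) : Set V → Prop
  | isolated (A : Set V) (u : V) (hu : u ∈ A) (hiso : ∀ w ∈ A, ¬ G.Adj u w) : GoodSet G A
  | step (A : Set V) (u v : V) (hu : u ∈ A) (hv : v ∈ A) (huv : G.Adj u v)
      (hun : ∀ w ∈ A, G.Adj u w → w = v) (h : GoodSet G (A \ stSet G v)) : GoodSet G A

variable (G : SimpleGraph V) (A : Set V) (u v : V)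

lemma mem_faces_iff (s : Finset V) :
    s ∈ (indepComplexOn G A).faces ↔ (∀ x ∈ s, x ∈ A) ∧ ∀ a ∈ s, ∀ b ∈ s, ¬ G.Adj a b := by
  constructor
  · exact fun h => ⟨fun x hx => h.1 (Finset.mem_coe.2 hx), h.2⟩
  · exact fun h => ⟨fun x hx => h.1 x (Finset.mem_coe.1 hx), h.2⟩

lemma face_union_u {t : Finset V} (ht : t ∈ (indepComplexOn G A).faces) (hu : u ∈ A)
    (hnadj : ∀ w ∈ t, ¬ G.Adj u w) : t ∪ {u} ∈ (indepComplexOn G A).faces := by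
  rw [mem_faces_iff] at ht ⊢
  constructor
  · intro x hx
    rcases Finset.mem_union.1 hx with hx | hx
    · exact ht.1 x hx
    · rw [Finset.mem_singleton] at hx; subst hx; exact hu
  · intro a ha b hb
    rcases Finset.mem_union.1 ha with ha' | ha' <;> rcases Finset.mem_union.1 hb with hb' | hb'
    · exact ht.2 a ha' b hb'
    · rw [Finset.mem_singleton] at hb'
      intro hadj; rw [hb'] at hadj; exact hnadj a ha' hadj.symm
    · rw [Finset.mem_singleton] at ha'
      rw [ha']; exact hnadj b hb'
    · rw [Finset.mem_singleton] at ha'; rw [Finset.mem_singleton] at hb'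
      rw [ha', hb']; exact G.irrefl

lemma isolated_contractible (hu : u ∈ A) (hiso : ∀ w ∈ A, ¬ G.Adj u w) :
    ContractibleSpace (indepComplexOn G A).space := by
  rw [contractible_iff_id_nullhomotopic]
  refine ⟨dpt G A u hu, ⟨?_⟩⟩
  refine ContinuousMap.Homotopy.mk
    ⟨fun q => ⟨fun w => (1 - (q.1 : ℝ)) * q.2.1 w + (q.1 : ℝ) * dvert u w, ?_⟩, ?_⟩ ?_ ?_
  · obtain ⟨hpos, t, ht, h0, h1⟩ := q.2.2
    refine mixMem (sub_nonneg.2 q.1.2.2) q.1.2.1 (by ring) hpos h0 h1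
      (fun x => dvert_nonneg u x) (fun x hx => dvert_zero u x (by simpa using hx))
      (dvert_sum u)
      (face_union_u G A u ht hu (fun w hw => hiso w (((mem_faces_iff G A t).1 ht).1 w hw)))
  · refine Continuous.subtype_mk ?_ _
    apply continuous_pi
    intro w
    have hc1 : Continuous fun q : I × (indepComplexOn G A).space => (q.1 : ℝ) :=
      continuous_subtype_val.comp continuous_fst
    have hc2 : Continuous fun q : I × (indepComplexOn G A).space => q.2.1 w :=
      (continuous_apply w).comp (continuous_subtype_val.comp continuous_snd)
    exact ((continuous_const.sub hc1).mul hc2).add (hc1.mul continuous_const)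
  · intro f
    apply Subtype.ext
    funext w
    show (1 - ((0 : I) : ℝ)) * f.1 w + ((0 : I) : ℝ) * dvert u w = f.1 w
    norm_num
  · intro f
    apply Subtype.ext
    funext w
    show (1 - ((1 : I) : ℝ)) * f.1 w + ((1 : I) : ℝ) * dvert u w = dvert u w
    norm_num

end StepSec
section PhiSec

variable {V : Type} [Fintype V] [DecidableEq V] (G : SimpleGraph V) (A : Set V) (v : V)

noncomputable def gfun (f : V → ℝ) : V → ℝ := fun w => if w = v then 0 else f w / (1 - f v)

lemma gfun_mem (hv : v ∈ A) (f : (indepComplexOn G A).space)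
    (h0 : 0 < f.1 v) (h1 : f.1 v < 1) :
    inSp (indepComplexOn G (A \ stSet G v)) (gfun v f.1) := by
  obtain ⟨hpos, s, hs, hz, hsum⟩ := f.2
  have hvs : v ∈ s := by
    by_contra hc; rw [hz v hc] at h0; exact lt_irrefl 0 h0
  have hd : (0:ℝ) < 1 - f.1 v := by linarith
  constructor
  · intro x
    unfold gfun
    split
    · exact le_refl 0
    · exact div_nonneg (hpos x) hd.le
  · refine ⟨s.erase v, ?_, ?_, ?_⟩
    · rw [mem_faces_iff]
      constructor
      · intro x hx
        have hxs := Finset.mem_of_mem_erase hx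
        have hxv := Finset.ne_of_mem_erase hx
        refine ⟨((mem_faces_iff G A s).1 hs).1 x hxs, ?_⟩
        intro hst
        rcases Set.mem_insert_iff.1 hst with hh | hh
        · exact hxv hh
        · exact ((mem_faces_iff G A s).1 hs).2 v hvs x hxs hh
      · intro a ha b hb
        exact ((mem_faces_iff G A s).1 hs).2 a (Finset.mem_of_mem_erase ha) b
          (Finset.mem_of_mem_erase hb)
    · intro x hx
      unfold gfun
      split
      · rfl
      · rename_i hxv
        rw [hz x (fun hc => hx (Finset.mem_erase.2 ⟨hxv, hc⟩)), zero_div]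
    · have he : ∀ x ∈ s.erase v, gfun v f.1 x = f.1 x / (1 - f.1 v) := by
        intro x hx; unfold gfun; rw [if_neg (Finset.ne_of_mem_erase hx)]
      rw [Finset.sum_congr rfl he, ← Finset.sum_div]
      have hsplit : f.1 v + ∑ x ∈ s.erase v, f.1 x = 1 := by
        rw [Finset.add_sum_erase s f.1 hvs]; exact hsum
      rw [show ∑ x ∈ s.erase v, f.1 x = 1 - f.1 v by linarith]
      exact div_self (ne_of_gt hd)

noncomputable def gpt (hv : v ∈ A) (f : (indepComplexOn G A).space)
    (h0 : 0 < f.1 v) (h1 : f.1 v < 1) : (indepComplexOn G (A \ stSet G v)).space :=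
  ⟨gfun v f.1, gfun_mem G A v hv f h0 h1⟩

noncomputable def tA (s : ℝ) (hs : 0 ≤ s) (τ : I) : I :=
  ⟨min (2*s) 1 * τ, ⟨mul_nonneg (le_min (by linarith) zero_le_one) τ.2.1,
    le_trans (mul_le_mul (min_le_right _ _) τ.2.2 τ.2.1 zero_le_one) (by norm_num)⟩⟩

noncomputable def tB (s : ℝ) (hs : 0 ≤ s) : I :=
  ⟨min (2*s) 1, ⟨le_min (by linarith) zero_le_one, min_le_right _ _⟩⟩

lemma Lface_in_X {t : Finset V} (ht : t ∈ (indepComplexOn G (A \ stSet G v)).faces) :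
    t ∈ (indepComplexOn G A).faces :=
  indepComplexOn_mono G Set.diff_subset ht

lemma not_adj_of_Lface {t : Finset V} (ht : t ∈ (indepComplexOn G (A \ stSet G v)).faces) :
    ∀ w ∈ t, ¬ G.Adj v w := by
  intro w hw hadj
  exact (((mem_faces_iff G _ t).1 ht).1 w hw).2 (Set.mem_insert_iff.2 (Or.inr hadj))

lemma Lcoord_v_zero (q : (indepComplexOn G (A \ stSet G v)).space) : q.1 v = 0 := by
  obtain ⟨hpos, t, ht, h0, h1⟩ := q.2
  refine h0 v (fun hc => ?_)
  exact (((mem_faces_iff G _ t).1 ht).1 v hc).2 (Set.mem_insert v _)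

/-- Convex combination of `v` and a point of the link lies in the big complex. -/
lemma mixMem_v (hv : v ∈ A) (a : ℝ) (ha0 : 0 ≤ a) (ha1 : a ≤ 1)
    (q : (indepComplexOn G (A \ stSet G v)).space) :
    inSp (indepComplexOn G A) (fun w => a * dvert v w + (1 - a) * q.1 w) := by
  obtain ⟨hqpos, tq, htq, hq0, hq1⟩ := q.2
  refine mixMem ha0 (by linarith) (by ring) (dvert_nonneg v)
    (fun x hx => dvert_zero v x (by simpa using hx)) (dvert_sum v) hqpos hq0 hq1 ?_
  rw [Finset.union_comm]
  exact face_union_u G A v (Lface_in_X G A v htq) hv (not_adj_of_Lface G A v htq)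

variable (c : C(I × (indepComplexOn G (A \ stSet G v)).space,
    (indepComplexOn G (A \ stSet G v)).space))
  (p0 : (indepComplexOn G (A \ stSet G v)).space)

noncomputable def phi1 (hv : v ∈ A) : (indepComplexOn G A).space × I → V → ℝ := fun z =>
  if h : 0 < z.1.1 v ∧ z.1.1 v < 1 then
    fun w => z.1.1 v * dvert v w +
      (1 - z.1.1 v) * (c (tA (z.1.1 v) (z.1.2.1 v) z.2, gpt G A v hv z.1 h.1 h.2)).1 w
  else z.1.1

noncomputable def phi2 (hv : v ∈ A) : (indepComplexOn G A).space × I → V → ℝ := fun z =>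
  if h : 0 < z.1.1 v ∧ z.1.1 v < 1 then
    fun w => (z.2 : ℝ) * z.1.1 v * dvert v w +
      (1 - (z.2 : ℝ) * z.1.1 v) * (c (tB (z.1.1 v) (z.1.2.1 v), gpt G A v hv z.1 h.1 h.2)).1 w
  else if z.1.1 v = 0 then z.1.1
  else fun w => (z.2 : ℝ) * dvert v w + (1 - (z.2 : ℝ)) * p0.1 w

lemma phi1_mem (hv : v ∈ A) (z : (indepComplexOn G A).space × I) :
    inSp (indepComplexOn G A) (phi1 G A v c hv z) := by
  unfold phi1
  split_ifs with h
  · exact mixMem_v G A v hv (z.1.1 v) h.1.le h.2.le _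
  · exact z.1.2

lemma phi2_mem (hv : v ∈ A) (z : (indepComplexOn G A).space × I) :
    inSp (indepComplexOn G A) (phi2 G A v c p0 hv z) := by
  unfold phi2
  split_ifs with h h2
  · refine mixMem_v G A v hv ((z.2 : ℝ) * z.1.1 v) (mul_nonneg z.2.2.1 h.1.le) ?_ _
    have h1 : (z.2 : ℝ) ≤ 1 := z.2.2.2
    have h2 : z.1.1 v ≤ 1 := h.2.le
    nlinarith [z.2.2.1, h.1.le]
  · exact z.1.2
  · exact mixMem_v G A v hv (z.2 : ℝ) z.2.2.1 z.2.2.2 p0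

lemma cont_S : Continuous (fun z : (indepComplexOn G A).space × I => z.1.1 v) :=
  (continuous_apply v).comp (continuous_subtype_val.comp continuous_fst)

lemma dist_coord_le (z z' : (indepComplexOn G A).space × I) (w : V) :
    |z.1.1 w - z'.1.1 w| ≤ dist z z' := by
  calc |z.1.1 w - z'.1.1 w| = dist (z.1.1 w) (z'.1.1 w) := (Real.dist_eq _ _).symm
    _ ≤ dist z.1.1 z'.1.1 := dist_le_pi_dist _ _ w
    _ = dist z.1 z'.1 := (Subtype.dist_eq _ _).symm
    _ ≤ dist z z' := by rw [Prod.dist_eq]; exact le_max_left _ _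

/-- The key per-coordinate estimate near `f v = 0`. -/
lemma coord_est (hv : v ∈ A) (f : (indepComplexOn G A).space)
    (h0 : 0 < f.1 v) (h1 : f.1 v < 1) (hhalf : f.1 v ≤ 1/2)
    (a : ℝ) (ha0 : 0 ≤ a) (ha : a ≤ f.1 v)
    (q : (indepComplexOn G (A \ stSet G v)).space) (e : ℝ)
    (hq : dist q (gpt G A v hv f h0 h1) ≤ e) (w : V) :
    |a * dvert v w + (1 - a) * q.1 w - f.1 w| ≤ e + 3 * f.1 v := by
  set g := gpt G A v hv f h0 h1 with hgdef
  have hqw : |q.1 w - g.1 w| ≤ e := by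
    calc |q.1 w - g.1 w| = dist (q.1 w) (g.1 w) := (Real.dist_eq _ _).symm
      _ ≤ dist q.1 g.1 := dist_le_pi_dist _ _ w
      _ = dist q g := (Subtype.dist_eq _ _).symm
      _ ≤ e := hq
  have hgf : |g.1 w - f.1 w| ≤ 2 * f.1 v := by
    show |gfun v f.1 w - f.1 w| ≤ _
    unfold gfun
    by_cases hw : w = v
    · rw [if_pos hw, hw, zero_sub, abs_neg, abs_of_nonneg (f.2.1 v)]; linarith
    · rw [if_neg hw]
      have hfw0 : 0 ≤ f.1 w := f.2.1 w
      have hfw1 : f.1 w ≤ 1 := coord_le_one f w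
      have hd : (0:ℝ) < 1 - f.1 v := by linarith
      have he : f.1 w / (1 - f.1 v) - f.1 w = f.1 w * f.1 v / (1 - f.1 v) := by
        field_simp
        ring
      rw [he, abs_of_nonneg (by positivity), div_le_iff₀ hd]
      nlinarith
  have hdq : |dvert v w - q.1 w| ≤ 1 := by
    have := dvert_nonneg v w
    have := dvert_le_one v w
    have h1' : 0 ≤ q.1 w := q.2.1 w
    have h2' : q.1 w ≤ 1 := coord_le_one q w
    rw [abs_le]; constructor <;> linarith
  have hkey : a * dvert v w + (1 - a) * q.1 w - f.1 w =
      a * (dvert v w - q.1 w) + (q.1 w - g.1 w) + (g.1 w - f.1 w) := by ring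
  rw [hkey]
  calc |a * (dvert v w - q.1 w) + (q.1 w - g.1 w) + (g.1 w - f.1 w)|
      ≤ |a * (dvert v w - q.1 w)| + |q.1 w - g.1 w| + |g.1 w - f.1 w| := abs_add_three _ _ _
    _ ≤ a * 1 + e + 2 * f.1 v := by
        gcongr
        · rw [abs_mul, abs_of_nonneg ha0]; exact mul_le_mul_of_nonneg_left hdq ha0
    _ ≤ e + 3 * f.1 v := by linarith

lemma phi1_cont (hv : v ∈ A) (hc0 : ∀ y, c (0, y) = y) :
    Continuous (phi1 G A v c hv) := by
  haveI : CompactSpace (indepComplexOn G (A \ stSet G v)).space := compactSpace_space _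
  have hUC : UniformContinuous (fun y : I × (indepComplexOn G (A \ stSet G v)).space => c y) :=
    CompactSpace.uniformContinuous_of_continuous c.continuous
  rw [Metric.uniformContinuous_iff] at hUC
  rw [continuous_iff_continuousAt]
  intro z₀
  have hS0 : 0 ≤ z₀.1.1 v := z₀.1.2.1 v
  have hS1 : z₀.1.1 v ≤ 1 := coord_le_one z₀.1 v
  rcases eq_or_lt_of_le hS0 with h0 | h0
  · -- at f v = 0
    rw [Metric.continuousAt_iff]
    intro ε hε
    obtain ⟨δc, hδc, hcc⟩ := hUC (ε/8) (by linarith)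
    refine ⟨min (min (ε/8) (1/4)) (δc/2), by positivity, ?_⟩
    intro z hz
    have hzS : z.1.1 v < min (min (ε/8) (1/4)) (δc/2) := by
      calc z.1.1 v = |z.1.1 v - z₀.1.1 v| := by
            rw [← h0, sub_zero, abs_of_nonneg (z.1.2.1 v)]
        _ ≤ dist z z₀ := dist_coord_le G A z z₀ v
        _ < _ := hz
    have hφ₀ : phi1 G A v c hv z₀ = z₀.1.1 := by
      unfold phi1
      rw [dif_neg]
      rw [not_and_or]
      exact Or.inl (by rw [← h0]; exact lt_irrefl 0)
    rw [hφ₀]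
    have hzS8 : z.1.1 v < ε/8 := lt_of_lt_of_le hzS (le_trans (min_le_left _ _) (min_le_left _ _))
    have hzS4 : z.1.1 v < 1/4 := lt_of_lt_of_le hzS (le_trans (min_le_left _ _) (min_le_right _ _))
    have hzSc : z.1.1 v < δc/2 := lt_of_lt_of_le hzS (min_le_right _ _)
    by_cases h : 0 < z.1.1 v ∧ z.1.1 v < 1
    · have hval : phi1 G A v c hv z = fun w => z.1.1 v * dvert v w +
          (1 - z.1.1 v) * (c (tA (z.1.1 v) (z.1.2.1 v) z.2, gpt G A v hv z.1 h.1 h.2)).1 w := by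
        unfold phi1; rw [dif_pos h]
      rw [hval]
      have hqg : dist (c (tA (z.1.1 v) (z.1.2.1 v) z.2, gpt G A v hv z.1 h.1 h.2))
          (gpt G A v hv z.1 h.1 h.2) ≤ ε/8 := by
        have hdist : dist ((tA (z.1.1 v) (z.1.2.1 v) z.2, gpt G A v hv z.1 h.1 h.2))
            (((0:I), gpt G A v hv z.1 h.1 h.2)) < δc := by
          rw [Prod.dist_eq]
          refine max_lt ?_ (by simpa using hδc)
          rw [Subtype.dist_eq, Real.dist_eq]
          show |min (2 * z.1.1 v) 1 * (z.2 : ℝ) - ((0:I) : ℝ)| < δc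
          have h1' : ((0:I) : ℝ) = 0 := rfl
          rw [h1', sub_zero]
          have hmn : 0 ≤ min (2 * z.1.1 v) 1 := le_min (by linarith [h.1.le]) zero_le_one
          rw [abs_of_nonneg (mul_nonneg hmn z.2.2.1)]
          calc min (2 * z.1.1 v) 1 * (z.2 : ℝ) ≤ (2 * z.1.1 v) * 1 :=
                mul_le_mul (min_le_left _ _) z.2.2.2 z.2.2.1 (by linarith [h.1.le])
            _ = 2 * z.1.1 v := by ring
            _ < δc := by linarith
        have := hcc hdist
        rw [hc0 (gpt G A v hv z.1 h.1 h.2)] at this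
        exact this.le
      have hest := coord_est G A v hv z.1 h.1 h.2 (by linarith) (z.1.1 v) h.1.le le_rfl
        _ (ε/8) hqg
      have hdz : dist (fun w => z.1.1 v * dvert v w +
          (1 - z.1.1 v) * (c (tA (z.1.1 v) (z.1.2.1 v) z.2, gpt G A v hv z.1 h.1 h.2)).1 w)
          z₀.1.1 ≤ ε/8 + 3 * z.1.1 v + dist z z₀ := by
        rw [dist_pi_le_iff (by have := z.1.2.1 v; positivity)]
        intro w
        rw [Real.dist_eq]
        calc |z.1.1 v * dvert v w +
            (1 - z.1.1 v) * (c (tA (z.1.1 v) (z.1.2.1 v) z.2, gpt G A v hv z.1 h.1 h.2)).1 w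
              - z₀.1.1 w|
            ≤ |z.1.1 v * dvert v w +
              (1 - z.1.1 v) * (c (tA (z.1.1 v) (z.1.2.1 v) z.2, gpt G A v hv z.1 h.1 h.2)).1 w
              - z.1.1 w| + |z.1.1 w - z₀.1.1 w| := abs_sub_le _ _ _
          _ ≤ (ε/8 + 3 * z.1.1 v) + dist z z₀ := by
              gcongr
              · exact hest w
              · exact dist_coord_le G A z z₀ w
      calc dist _ z₀.1.1 ≤ ε/8 + 3 * z.1.1 v + dist z z₀ := hdz
        _ < ε/8 + 3 * (ε/8) + ε/8 := by
            have := lt_of_lt_of_le hz (le_trans (min_le_left _ _) (min_le_left _ _))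
            linarith
        _ < ε := by linarith
    · have hval : phi1 G A v c hv z = z.1.1 := by
        unfold phi1; rw [dif_neg h]
      rw [hval]
      calc dist z.1.1 z₀.1.1 = dist z.1 z₀.1 := (Subtype.dist_eq _ _).symm
        _ ≤ dist z z₀ := by rw [Prod.dist_eq]; exact le_max_left _ _
        _ < _ := hz
        _ ≤ ε/8 := le_trans (min_le_left _ _) (min_le_left _ _)
        _ < ε := by linarith
  · rcases eq_or_lt_of_le hS1 with h1 | h1
    · -- at f v = 1
      rw [Metric.continuousAt_iff]
      intro ε hε
      refine ⟨min (ε/3) (1/4), by positivity, ?_⟩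
      intro z hz
      have hf₀ : z₀.1.1 = dvert v := eq_dvert_of_coord_one z₀.1 v h1
      have hφ₀ : phi1 G A v c hv z₀ = z₀.1.1 := by
        unfold phi1
        rw [dif_neg]
        rw [not_and_or]
        exact Or.inr (by rw [h1]; exact lt_irrefl 1)
      rw [hφ₀]
      have hd1 : |z.1.1 v - 1| ≤ dist z z₀ := by
        have h' := dist_coord_le G A z z₀ v
        rwa [h1] at h'
      have hgt : 1/2 < z.1.1 v := by
        have habs := abs_sub_le_iff.1 hd1
        have hlt : dist z z₀ < 1/4 := lt_of_lt_of_le hz (min_le_right _ _)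
        linarith [habs.2]
      have hbound : dist (phi1 G A v c hv z) z₀.1.1 ≤ 2 * dist z z₀ := by
        rw [dist_pi_le_iff (by positivity)]
        intro w
        rw [Real.dist_eq, hf₀]
        by_cases h : 0 < z.1.1 v ∧ z.1.1 v < 1
        · have hval : phi1 G A v c hv z = fun w => z.1.1 v * dvert v w +
              (1 - z.1.1 v) * (c (tA (z.1.1 v) (z.1.2.1 v) z.2,
                gpt G A v hv z.1 h.1 h.2)).1 w := by
            unfold phi1; rw [dif_pos h]
          rw [hval]
          set q := c (tA (z.1.1 v) (z.1.2.1 v) z.2, gpt G A v hv z.1 h.1 h.2)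
          have hkey : z.1.1 v * dvert v w + (1 - z.1.1 v) * q.1 w - dvert v w
              = (1 - z.1.1 v) * (q.1 w - dvert v w) := by ring
          rw [hkey, abs_mul]
          have hq0 : 0 ≤ q.1 w := q.2.1 w
          have hq1 : q.1 w ≤ 1 := coord_le_one q w
          have habs1 : |q.1 w - dvert v w| ≤ 1 := by
            have := dvert_nonneg v w; have := dvert_le_one v w
            rw [abs_le]; constructor <;> linarith
          have habs2 : |1 - z.1.1 v| ≤ dist z z₀ := by
            rw [abs_sub_comm] at hd1; exact hd1
          calc |1 - z.1.1 v| * |q.1 w - dvert v w| ≤ dist z z₀ * 1 := by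
                refine mul_le_mul habs2 habs1 (abs_nonneg _) dist_nonneg
            _ ≤ 2 * dist z z₀ := by linarith [dist_nonneg (x := z) (y := z₀)]
        · have hval : phi1 G A v c hv z = z.1.1 := by unfold phi1; rw [dif_neg h]
          rw [hval, ← hf₀]
          calc |z.1.1 w - z₀.1.1 w| ≤ dist z z₀ := dist_coord_le G A z z₀ w
            _ ≤ 2 * dist z z₀ := by linarith [dist_nonneg (x := z) (y := z₀)]
      calc dist (phi1 G A v c hv z) z₀.1.1 ≤ 2 * dist z z₀ := hbound
        _ < 2 * (ε/3) := by
            have : dist z z₀ < ε/3 := lt_of_lt_of_le hz (min_le_left _ _)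
            linarith
        _ < ε := by linarith
    · -- 0 < f v < 1 : open region, composition of continuous maps
      have hUopen : IsOpen {z : (indepComplexOn G A).space × I | 0 < z.1.1 v ∧ z.1.1 v < 1} := by
        have ho1 : IsOpen {z : (indepComplexOn G A).space × I | 0 < z.1.1 v} :=
          isOpen_lt continuous_const (cont_S G A v)
        have ho2 : IsOpen {z : (indepComplexOn G A).space × I | z.1.1 v < 1} :=
          isOpen_lt (cont_S G A v) continuous_const
        exact ho1.inter ho2
      have hcontU : ContinuousOn (phi1 G A v c hv)
          {z : (indepComplexOn G A).space × I | 0 < z.1.1 v ∧ z.1.1 v < 1} := by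
        rw [continuousOn_iff_continuous_restrict]
        have heq : ({z : (indepComplexOn G A).space × I | 0 < z.1.1 v ∧ z.1.1 v < 1}).domRestrict
            (phi1 G A v c hv) = fun z : {z : (indepComplexOn G A).space × I //
              0 < z.1.1 v ∧ z.1.1 v < 1} =>
            fun w => z.1.1.1 v * dvert v w + (1 - z.1.1.1 v) *
              (c (tA (z.1.1.1 v) (z.1.1.2.1 v) z.1.2, gpt G A v hv z.1.1 z.2.1 z.2.2)).1 w := by
          funext z
          show phi1 G A v c hv z.1 = _
          unfold phi1
          exact dif_pos z.2
        rw [heq]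
        have hS : Continuous fun z : {z : (indepComplexOn G A).space × I //
            0 < z.1.1 v ∧ z.1.1 v < 1} => z.1.1.1 v :=
          (cont_S G A v).comp continuous_subtype_val
        have hτ : Continuous fun z : {z : (indepComplexOn G A).space × I //
            0 < z.1.1 v ∧ z.1.1 v < 1} => ((z.1.2 : I) : ℝ) :=
          continuous_subtype_val.comp (continuous_snd.comp continuous_subtype_val)
        have hgc : Continuous fun z : {z : (indepComplexOn G A).space × I //
            0 < z.1.1 v ∧ z.1.1 v < 1} => gpt G A v hv z.1.1 z.2.1 z.2.2 := by
          refine Continuous.subtype_mk ?_ _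
          apply continuous_pi
          intro w
          show Continuous fun z : {z : (indepComplexOn G A).space × I //
              0 < z.1.1 v ∧ z.1.1 v < 1} => if w = v then 0 else z.1.1.1 w / (1 - z.1.1.1 v)
          by_cases hw : w = v
          · simp only [if_pos hw]; exact continuous_const
          · simp only [if_neg hw]
            refine Continuous.div ?_ (continuous_const.sub hS) ?_
            · exact (continuous_apply w).comp
                (continuous_subtype_val.comp (continuous_fst.comp continuous_subtype_val))
            · intro z; have := z.2.2; exact ne_of_gt (by linarith)
        have htc : Continuous fun z : {z : (indepComplexOn G A).space × I //
            0 < z.1.1 v ∧ z.1.1 v < 1} => tA (z.1.1.1 v) (z.1.1.2.1 v) z.1.2 := by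
          refine Continuous.subtype_mk ?_ _
          exact ((continuous_const.mul hS).min continuous_const).mul hτ
        have hqc : Continuous fun z : {z : (indepComplexOn G A).space × I //
            0 < z.1.1 v ∧ z.1.1 v < 1} =>
            (c (tA (z.1.1.1 v) (z.1.1.2.1 v) z.1.2, gpt G A v hv z.1.1 z.2.1 z.2.2)).1 :=
          continuous_subtype_val.comp (c.continuous.comp (htc.prodMk hgc))
        apply continuous_pi
        intro w
        exact (hS.mul continuous_const).add
          ((continuous_const.sub hS).mul ((continuous_apply w).comp hqc))
      exact hcontU.continuousAt (hUopen.mem_nhds ⟨h0, h1⟩)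

end PhiSec
section Phi2Sec

variable {V : Type} [Fintype V] [DecidableEq V] (G : SimpleGraph V) (A : Set V) (v : V)
  (c : C(I × (indepComplexOn G (A \ stSet G v)).space,
    (indepComplexOn G (A \ stSet G v)).space))
  (p0 : (indepComplexOn G (A \ stSet G v)).space)

lemma coeI0 : ((0:I) : ℝ) = 0 := rfl
lemma coeI1 : ((1:I) : ℝ) = 1 := rfl

lemma phi2_cont (hv : v ∈ A) (hc0 : ∀ y, c (0, y) = y) (hc1 : ∀ y, c (1, y) = p0) :
    Continuous (phi2 G A v c p0 hv) := by
  haveI : CompactSpace (indepComplexOn G (A \ stSet G v)).space := compactSpace_space _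
  have hUC : UniformContinuous (fun y : I × (indepComplexOn G (A \ stSet G v)).space => c y) :=
    CompactSpace.uniformContinuous_of_continuous c.continuous
  rw [Metric.uniformContinuous_iff] at hUC
  rw [continuous_iff_continuousAt]
  intro z₀
  have hS0 : 0 ≤ z₀.1.1 v := z₀.1.2.1 v
  have hS1 : z₀.1.1 v ≤ 1 := coord_le_one z₀.1 v
  rcases eq_or_lt_of_le hS0 with h0 | h0
  · -- at f v = 0
    rw [Metric.continuousAt_iff]
    intro ε hε
    obtain ⟨δc, hδc, hcc⟩ := hUC (ε/8) (by linarith)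
    refine ⟨min (min (ε/8) (1/4)) (δc/2), by positivity, ?_⟩
    intro z hz
    have hzS : z.1.1 v < min (min (ε/8) (1/4)) (δc/2) := by
      calc z.1.1 v = |z.1.1 v - z₀.1.1 v| := by
            rw [← h0, sub_zero, abs_of_nonneg (z.1.2.1 v)]
        _ ≤ dist z z₀ := dist_coord_le G A z z₀ v
        _ < _ := hz
    have hφ₀ : phi2 G A v c p0 hv z₀ = z₀.1.1 := by
      unfold phi2
      rw [dif_neg, if_pos h0.symm]
      rw [not_and_or]
      exact Or.inl (by rw [← h0]; exact lt_irrefl 0)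
    rw [hφ₀]
    have hzS8 : z.1.1 v < ε/8 := lt_of_lt_of_le hzS (le_trans (min_le_left _ _) (min_le_left _ _))
    have hzS4 : z.1.1 v < 1/4 := lt_of_lt_of_le hzS (le_trans (min_le_left _ _) (min_le_right _ _))
    have hzSc : z.1.1 v < δc/2 := lt_of_lt_of_le hzS (min_le_right _ _)
    by_cases h : 0 < z.1.1 v ∧ z.1.1 v < 1
    · have hval : phi2 G A v c p0 hv z = fun w => (z.2 : ℝ) * z.1.1 v * dvert v w +
          (1 - (z.2 : ℝ) * z.1.1 v) *
            (c (tB (z.1.1 v) (z.1.2.1 v), gpt G A v hv z.1 h.1 h.2)).1 w := by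
        unfold phi2; rw [dif_pos h]
      rw [hval]
      have hqg : dist (c (tB (z.1.1 v) (z.1.2.1 v), gpt G A v hv z.1 h.1 h.2))
          (gpt G A v hv z.1 h.1 h.2) ≤ ε/8 := by
        have hdist : dist ((tB (z.1.1 v) (z.1.2.1 v), gpt G A v hv z.1 h.1 h.2))
            (((0:I), gpt G A v hv z.1 h.1 h.2)) < δc := by
          rw [Prod.dist_eq]
          refine max_lt ?_ (by simpa using hδc)
          rw [Subtype.dist_eq, Real.dist_eq]
          show |min (2 * z.1.1 v) 1 - ((0:I) : ℝ)| < δc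
          rw [coeI0, sub_zero]
          have hmn : 0 ≤ min (2 * z.1.1 v) 1 := le_min (by linarith [h.1.le]) zero_le_one
          rw [abs_of_nonneg hmn]
          calc min (2 * z.1.1 v) 1 ≤ 2 * z.1.1 v := min_le_left _ _
            _ < δc := by linarith
        have := hcc hdist
        rw [hc0 (gpt G A v hv z.1 h.1 h.2)] at this
        exact this.le
      have hσS0 : 0 ≤ (z.2 : ℝ) * z.1.1 v := mul_nonneg z.2.2.1 h.1.le
      have hσS : (z.2 : ℝ) * z.1.1 v ≤ z.1.1 v := mul_le_of_le_one_left h.1.le z.2.2.2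
      have hest := coord_est G A v hv z.1 h.1 h.2 (by linarith) ((z.2 : ℝ) * z.1.1 v) hσS0 hσS
        _ (ε/8) hqg
      have hdz : dist (fun w => (z.2 : ℝ) * z.1.1 v * dvert v w +
          (1 - (z.2 : ℝ) * z.1.1 v) *
            (c (tB (z.1.1 v) (z.1.2.1 v), gpt G A v hv z.1 h.1 h.2)).1 w)
          z₀.1.1 ≤ ε/8 + 3 * z.1.1 v + dist z z₀ := by
        rw [dist_pi_le_iff (by have := z.1.2.1 v; positivity)]
        intro w
        rw [Real.dist_eq]
        calc |(z.2 : ℝ) * z.1.1 v * dvert v w + (1 - (z.2 : ℝ) * z.1.1 v) *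
              (c (tB (z.1.1 v) (z.1.2.1 v), gpt G A v hv z.1 h.1 h.2)).1 w - z₀.1.1 w|
            ≤ |(z.2 : ℝ) * z.1.1 v * dvert v w + (1 - (z.2 : ℝ) * z.1.1 v) *
              (c (tB (z.1.1 v) (z.1.2.1 v), gpt G A v hv z.1 h.1 h.2)).1 w
              - z.1.1 w| + |z.1.1 w - z₀.1.1 w| := abs_sub_le _ _ _
          _ ≤ (ε/8 + 3 * z.1.1 v) + dist z z₀ := by
              gcongr
              · exact hest w
              · exact dist_coord_le G A z z₀ w
      calc dist _ z₀.1.1 ≤ ε/8 + 3 * z.1.1 v + dist z z₀ := hdz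
        _ < ε/8 + 3 * (ε/8) + ε/8 := by
            have := lt_of_lt_of_le hz (le_trans (min_le_left _ _) (min_le_left _ _))
            linarith
        _ < ε := by linarith
    · have hz0 : z.1.1 v = 0 := by
        by_contra hne
        have hpos : 0 < z.1.1 v := lt_of_le_of_ne (z.1.2.1 v) (Ne.symm hne)
        rcases not_and_or.1 h with hh | hh
        · exact hh hpos
        · have : (1:ℝ) ≤ z.1.1 v := not_lt.1 hh
          linarith
      have hval : phi2 G A v c p0 hv z = z.1.1 := by
        unfold phi2; rw [dif_neg h, if_pos hz0]
      rw [hval]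
      calc dist z.1.1 z₀.1.1 = dist z.1 z₀.1 := (Subtype.dist_eq _ _).symm
        _ ≤ dist z z₀ := by rw [Prod.dist_eq]; exact le_max_left _ _
        _ < _ := hz
        _ ≤ ε/8 := le_trans (min_le_left _ _) (min_le_left _ _)
        _ < ε := by linarith
  · rcases eq_or_lt_of_le hS1 with h1 | h1
    · -- at f v = 1 : phi2 agrees with an easy formula on S > 1/2
      have hWopen : IsOpen {z : (indepComplexOn G A).space × I | 1/2 < z.1.1 v} :=
        isOpen_lt continuous_const (cont_S G A v)
      have hσc : Continuous fun z : (indepComplexOn G A).space × I => (z.2 : ℝ) :=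
        continuous_subtype_val.comp continuous_snd
      have hψ : Continuous (fun z : (indepComplexOn G A).space × I =>
          fun w => (z.2 : ℝ) * z.1.1 v * dvert v w +
            (1 - (z.2 : ℝ) * z.1.1 v) * p0.1 w) := by
        apply continuous_pi
        intro w
        exact (((hσc.mul (cont_S G A v))).mul continuous_const).add
          ((continuous_const.sub (hσc.mul (cont_S G A v))).mul continuous_const)
      refine ContinuousAt.congr hψ.continuousAt ?_
      refine Filter.eventuallyEq_of_mem (hWopen.mem_nhds ?_) ?_
      · show 1/2 < z₀.1.1 v
        rw [h1]; norm_num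
      · intro z hzW
        have hzW' : 1/2 < z.1.1 v := hzW
        by_cases h : 0 < z.1.1 v ∧ z.1.1 v < 1
        · have hcp : c (tB (z.1.1 v) (z.1.2.1 v), gpt G A v hv z.1 h.1 h.2) = p0 := by
            have ht1 : tB (z.1.1 v) (z.1.2.1 v) = (1:I) := by
              apply Subtype.ext
              show min (2 * z.1.1 v) 1 = ((1:I) : ℝ)
              rw [coeI1]
              exact min_eq_right (by linarith)
            rw [ht1]
            exact hc1 _
          show _ = phi2 G A v c p0 hv z
          unfold phi2
          rw [dif_pos h, hcp]
        · have hSeq : z.1.1 v = 1 := by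
            rcases not_and_or.1 h with hh | hh
            · exact absurd (by linarith : (0:ℝ) < z.1.1 v) hh
            · exact le_antisymm (coord_le_one z.1 v) (not_lt.1 hh)
          show _ = phi2 G A v c p0 hv z
          unfold phi2
          rw [dif_neg h, if_neg (by rw [hSeq]; norm_num)]
          funext w
          show (z.2:ℝ) * z.1.1 v * dvert v w + (1 - (z.2:ℝ) * z.1.1 v) * p0.1 w = _
          rw [hSeq]
          ring
    · -- 0 < f v < 1
      have hUopen : IsOpen {z : (indepComplexOn G A).space × I | 0 < z.1.1 v ∧ z.1.1 v < 1} := by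
        have ho1 : IsOpen {z : (indepComplexOn G A).space × I | 0 < z.1.1 v} :=
          isOpen_lt continuous_const (cont_S G A v)
        have ho2 : IsOpen {z : (indepComplexOn G A).space × I | z.1.1 v < 1} :=
          isOpen_lt (cont_S G A v) continuous_const
        exact ho1.inter ho2
      have hcontU : ContinuousOn (phi2 G A v c p0 hv)
          {z : (indepComplexOn G A).space × I | 0 < z.1.1 v ∧ z.1.1 v < 1} := by
        rw [continuousOn_iff_continuous_restrict]
        have heq : ({z : (indepComplexOn G A).space × I | 0 < z.1.1 v ∧ z.1.1 v < 1}).domRestrict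
            (phi2 G A v c p0 hv) = fun z : {z : (indepComplexOn G A).space × I //
              0 < z.1.1 v ∧ z.1.1 v < 1} =>
            fun w => ((z.1.2 : I) : ℝ) * z.1.1.1 v * dvert v w + (1 - ((z.1.2 : I) : ℝ) * z.1.1.1 v) *
              (c (tB (z.1.1.1 v) (z.1.1.2.1 v), gpt G A v hv z.1.1 z.2.1 z.2.2)).1 w := by
          funext z
          show phi2 G A v c p0 hv z.1 = _
          unfold phi2
          exact dif_pos z.2
        rw [heq]
        have hS : Continuous fun z : {z : (indepComplexOn G A).space × I //
            0 < z.1.1 v ∧ z.1.1 v < 1} => z.1.1.1 v :=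
          (cont_S G A v).comp continuous_subtype_val
        have hτ : Continuous fun z : {z : (indepComplexOn G A).space × I //
            0 < z.1.1 v ∧ z.1.1 v < 1} => ((z.1.2 : I) : ℝ) :=
          continuous_subtype_val.comp (continuous_snd.comp continuous_subtype_val)
        have hgc : Continuous fun z : {z : (indepComplexOn G A).space × I //
            0 < z.1.1 v ∧ z.1.1 v < 1} => gpt G A v hv z.1.1 z.2.1 z.2.2 := by
          refine Continuous.subtype_mk ?_ _
          apply continuous_pi
          intro w
          show Continuous fun z : {z : (indepComplexOn G A).space × I //
              0 < z.1.1 v ∧ z.1.1 v < 1} => if w = v then 0 else z.1.1.1 w / (1 - z.1.1.1 v)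
          by_cases hw : w = v
          · simp only [if_pos hw]; exact continuous_const
          · simp only [if_neg hw]
            refine Continuous.div ?_ (continuous_const.sub hS) ?_
            · exact (continuous_apply w).comp
                (continuous_subtype_val.comp (continuous_fst.comp continuous_subtype_val))
            · intro z; have := z.2.2; exact ne_of_gt (by linarith)
        have htc : Continuous fun z : {z : (indepComplexOn G A).space × I //
            0 < z.1.1 v ∧ z.1.1 v < 1} => tB (z.1.1.1 v) (z.1.1.2.1 v) := by
          refine Continuous.subtype_mk ?_ _
          exact (continuous_const.mul hS).min continuous_const
        have hqc : Continuous fun z : {z : (indepComplexOn G A).space × I //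
            0 < z.1.1 v ∧ z.1.1 v < 1} =>
            (c (tB (z.1.1.1 v) (z.1.1.2.1 v), gpt G A v hv z.1.1 z.2.1 z.2.2)).1 :=
          continuous_subtype_val.comp (c.continuous.comp (htc.prodMk hgc))
        apply continuous_pi
        intro w
        exact ((hτ.mul hS).mul continuous_const).add
          ((continuous_const.sub (hτ.mul hS)).mul ((continuous_apply w).comp hqc))
      exact hcontU.continuousAt (hUopen.mem_nhds ⟨h0, h1⟩)

end Phi2Sec
section HomotopySec

variable {V : Type} [Fintype V] [DecidableEq V] (G : SimpleGraph V) (A : Set V) (u v : V)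
  (c : C(I × (indepComplexOn G (A \ stSet G v)).space,
    (indepComplexOn G (A \ stSet G v)).space))
  (p0 : (indepComplexOn G (A \ stSet G v)).space)

lemma phi1_zero (hv : v ∈ A) (hc0 : ∀ y, c (0, y) = y) (f : (indepComplexOn G A).space) :
    phi1 G A v c hv (f, (0:I)) = f.1 := by
  unfold phi1
  split_ifs with h
  · funext w
    have htz : tA (f.1 v) (f.2.1 v) (0:I) = (0:I) := by
      apply Subtype.ext
      show min (2 * f.1 v) 1 * ((0:I):ℝ) = ((0:I):ℝ)
      rw [coeI0, mul_zero]
    rw [htz, hc0]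
    show f.1 v * dvert v w + (1 - f.1 v) * gfun v f.1 w = f.1 w
    unfold gfun dvert
    by_cases hw : w = v
    · rw [if_pos hw, if_pos hw, hw]; ring
    · rw [if_neg hw, if_neg hw]
      have hd : (1:ℝ) - f.1 v ≠ 0 := ne_of_gt (by linarith [h.2])
      field_simp
      ring
  · rfl

lemma phi1_one (hv : v ∈ A) (f : (indepComplexOn G A).space) :
    phi1 G A v c hv (f, (1:I)) = phi2 G A v c p0 hv (f, (1:I)) := by
  unfold phi1 phi2
  split_ifs with h h2
  · funext w
    have hteq : tA (f.1 v) (f.2.1 v) (1:I) = tB (f.1 v) (f.2.1 v) := by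
      apply Subtype.ext
      show min (2 * f.1 v) 1 * ((1:I):ℝ) = min (2 * f.1 v) 1
      rw [coeI1, mul_one]
    rw [hteq]
    show f.1 v * dvert v w + _ * (c (tB (f.1 v) (f.2.1 v), gpt G A v hv f h.1 h.2)).1 w
        = ((1:I):ℝ) * f.1 v * dvert v w +
          (1 - ((1:I):ℝ) * f.1 v) * (c (tB (f.1 v) (f.2.1 v), gpt G A v hv f h.1 h.2)).1 w
    rw [coeI1]
    ring
  · rfl
  · have hS1 : f.1 v = 1 := by
      rcases not_and_or.1 h with hh | hh
      · exact absurd (lt_of_le_of_ne (f.2.1 v) (Ne.symm h2)) hh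
      · exact le_antisymm (coord_le_one f v) (not_lt.1 hh)
    funext w
    rw [eq_dvert_of_coord_one f v hS1]
    show dvert v w = ((1:I):ℝ) * dvert v w + (1 - ((1:I):ℝ)) * p0.1 w
    rw [coeI1]
    ring

noncomputable def E1 (hv : v ∈ A) (hc0 : ∀ y, c (0, y) = y) (hc1 : ∀ y, c (1, y) = p0) :
    C((indepComplexOn G A).space, (indepComplexOn G A).space) :=
  ⟨fun f => ⟨phi2 G A v c p0 hv (f, (1:I)), phi2_mem G A v c p0 hv (f, (1:I))⟩,
    Continuous.subtype_mk ((phi2_cont G A v c p0 hv hc0 hc1).comp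
      (continuous_id.prodMk continuous_const)) _⟩

noncomputable def E2 (hv : v ∈ A) (hc0 : ∀ y, c (0, y) = y) (hc1 : ∀ y, c (1, y) = p0) :
    C((indepComplexOn G A).space, (indepComplexOn G A).space) :=
  ⟨fun f => ⟨phi2 G A v c p0 hv (f, (0:I)), phi2_mem G A v c p0 hv (f, (0:I))⟩,
    Continuous.subtype_mk ((phi2_cont G A v c p0 hv hc0 hc1).comp
      (continuous_id.prodMk continuous_const)) _⟩

noncomputable def H1 (hv : v ∈ A) (hc0 : ∀ y, c (0, y) = y) (hc1 : ∀ y, c (1, y) = p0) :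
    (ContinuousMap.id (indepComplexOn G A).space).Homotopy (E1 G A v c p0 hv hc0 hc1) where
  toFun := fun q => ⟨phi1 G A v c hv (q.2, q.1), phi1_mem G A v c hv (q.2, q.1)⟩
  continuous_toFun := Continuous.subtype_mk ((phi1_cont G A v c hv hc0).comp
    (continuous_snd.prodMk continuous_fst)) _
  map_zero_left := fun f => Subtype.ext (phi1_zero G A v c hv hc0 f)
  map_one_left := fun f => Subtype.ext (phi1_one G A v c p0 hv f)

noncomputable def H2 (hv : v ∈ A) (hc0 : ∀ y, c (0, y) = y) (hc1 : ∀ y, c (1, y) = p0) :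
    (E1 G A v c p0 hv hc0 hc1).Homotopy (E2 G A v c p0 hv hc0 hc1) where
  toFun := fun q => ⟨phi2 G A v c p0 hv (q.2, unitInterval.symm q.1),
    phi2_mem G A v c p0 hv (q.2, unitInterval.symm q.1)⟩
  continuous_toFun := Continuous.subtype_mk ((phi2_cont G A v c p0 hv hc0 hc1).comp
    (continuous_snd.prodMk (unitInterval.continuous_symm.comp continuous_fst))) _
  map_zero_left := fun f => Subtype.ext (by
    show phi2 G A v c p0 hv (f, unitInterval.symm 0) = phi2 G A v c p0 hv (f, (1:I))
    rw [unitInterval.symm_zero])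
  map_one_left := fun f => Subtype.ext (by
    show phi2 G A v c p0 hv (f, unitInterval.symm 1) = phi2 G A v c p0 hv (f, (0:I))
    rw [unitInterval.symm_one])

lemma not_adj_u_of_Lface (hun : ∀ w ∈ A, G.Adj u w → w = v) {t : Finset V}
    (ht : t ∈ (indepComplexOn G (A \ stSet G v)).faces) : ∀ w ∈ t, ¬ G.Adj u w := by
  intro w hw hadj
  have hwA : w ∈ A := (((mem_faces_iff G _ t).1 ht).1 w hw).1
  have hwst : w ∉ stSet G v := (((mem_faces_iff G _ t).1 ht).1 w hw).2
  rw [hun w hwA hadj] at hwst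
  exact hwst (Set.mem_insert v _)

lemma e2_face (hv : v ∈ A) (hu : u ∈ A) (hun : ∀ w ∈ A, G.Adj u w → w = v)
    (f : (indepComplexOn G A).space) :
    ∃ t : Finset V, (t ∪ {u} ∈ (indepComplexOn G A).faces) ∧
      (∀ x, x ∉ t → phi2 G A v c p0 hv (f, (0:I)) x = 0) ∧
      (∑ x ∈ t, phi2 G A v c p0 hv (f, (0:I)) x = 1) := by
  unfold phi2
  split_ifs with h h2
  · obtain ⟨hqpos, tq, htq, hq0, hq1⟩ := (c (tB (f.1 v) (f.2.1 v), gpt G A v hv f h.1 h.2)).2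
    refine ⟨tq, face_union_u G A u (Lface_in_X G A v htq) hu
      (not_adj_u_of_Lface G A u v hun htq), ?_, ?_⟩
    · intro x hx
      show ((0:I):ℝ) * f.1 v * dvert v x + (1 - ((0:I):ℝ) * f.1 v) *
        (c (tB (f.1 v) (f.2.1 v), gpt G A v hv f h.1 h.2)).1 x = 0
      rw [hq0 x hx, coeI0]
      ring
    · have he : ∀ x ∈ tq, ((0:I):ℝ) * f.1 v * dvert v x + (1 - ((0:I):ℝ) * f.1 v) *
          (c (tB (f.1 v) (f.2.1 v), gpt G A v hv f h.1 h.2)).1 x =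
          (c (tB (f.1 v) (f.2.1 v), gpt G A v hv f h.1 h.2)).1 x := by
        intro x _
        rw [coeI0]; ring
      rw [Finset.sum_congr rfl he, hq1]
  · obtain ⟨hpos, tf, htf, h0f, h1f⟩ := f.2
    refine ⟨tf.erase v, face_union_u G A u
      ((indepComplexOn G A).down_closed htf (Finset.erase_subset v tf)) hu ?_, ?_, ?_⟩
    · intro w hw hadj
      exact (Finset.ne_of_mem_erase hw)
        (hun w (((mem_faces_iff G A tf).1 htf).1 w (Finset.mem_of_mem_erase hw)) hadj)
    · intro x hx
      by_cases hxv : x = v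
      · rw [hxv]; exact h2
      · exact h0f x (fun hc => hx (Finset.mem_erase.2 ⟨hxv, hc⟩))
    · rw [Finset.sum_erase _ h2]
      exact h1f
  · obtain ⟨hppos, tp, htp, hp0, hp1⟩ := p0.2
    refine ⟨tp, face_union_u G A u (Lface_in_X G A v htp) hu
      (not_adj_u_of_Lface G A u v hun htp), ?_, ?_⟩
    · intro x hx
      show ((0:I):ℝ) * dvert v x + (1 - ((0:I):ℝ)) * p0.1 x = 0
      rw [hp0 x hx, coeI0]
      ring
    · have he : ∀ x ∈ tp, ((0:I):ℝ) * dvert v x + (1 - ((0:I):ℝ)) * p0.1 x = p0.1 x := by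
        intro x _
        rw [coeI0]; ring
      rw [Finset.sum_congr rfl he, hp1]

noncomputable def H3 (hv : v ∈ A) (hu : u ∈ A) (hun : ∀ w ∈ A, G.Adj u w → w = v)
    (hc0 : ∀ y, c (0, y) = y) (hc1 : ∀ y, c (1, y) = p0) :
    (E2 G A v c p0 hv hc0 hc1).Homotopy
      (ContinuousMap.const (indepComplexOn G A).space (dpt G A u hu)) where
  toFun := fun q => ⟨fun w => (1 - (q.1 : ℝ)) * phi2 G A v c p0 hv (q.2, (0:I)) w +
      (q.1 : ℝ) * dvert u w, by
    obtain ⟨t, hface, hz, hs⟩ := e2_face G A u v c p0 hv hu hun q.2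
    exact mixMem (sub_nonneg.2 q.1.2.2) q.1.2.1 (by ring)
      (phi2_mem G A v c p0 hv (q.2, (0:I))).1 hz hs (dvert_nonneg u)
      (fun x hx => dvert_zero u x (by simpa using hx)) (dvert_sum u) hface⟩
  continuous_toFun := by
    refine Continuous.subtype_mk ?_ _
    apply continuous_pi
    intro w
    have hσ : Continuous fun q : I × (indepComplexOn G A).space => (q.1 : ℝ) :=
      continuous_subtype_val.comp continuous_fst
    have hφ : Continuous fun q : I × (indepComplexOn G A).space =>
        phi2 G A v c p0 hv (q.2, (0:I)) w :=
      (continuous_apply w).comp ((phi2_cont G A v c p0 hv hc0 hc1).comp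
        (continuous_snd.prodMk continuous_const))
    exact ((continuous_const.sub hσ).mul hφ).add (hσ.mul continuous_const)
  map_zero_left := fun f => by
    apply Subtype.ext
    funext w
    show (1 - ((0:I):ℝ)) * phi2 G A v c p0 hv (f, (0:I)) w + ((0:I):ℝ) * dvert u w =
      phi2 G A v c p0 hv (f, (0:I)) w
    rw [coeI0]
    ring
  map_one_left := fun f => by
    apply Subtype.ext
    funext w
    show (1 - ((1:I):ℝ)) * phi2 G A v c p0 hv (f, (0:I)) w + ((1:I):ℝ) * dvert u w = dvert u w
    rw [coeI1]
    ring

lemma step_contractible (hu : u ∈ A) (hv : v ∈ A) (huv : G.Adj u v)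
    (hun : ∀ w ∈ A, G.Adj u w → w = v)
    (hL : ContractibleSpace (indepComplexOn G (A \ stSet G v)).space) :
    ContractibleSpace (indepComplexOn G A).space := by
  obtain ⟨p0, hhom⟩ := (contractible_iff_id_nullhomotopic _).mp hL
  obtain ⟨Hc⟩ := hhom
  have hc0 : ∀ y, Hc.toContinuousMap (0, y) = y := fun y => Hc.apply_zero y
  have hc1 : ∀ y, Hc.toContinuousMap (1, y) = p0 := fun y => Hc.apply_one y
  rw [contractible_iff_id_nullhomotopic]
  exact ⟨dpt G A u hu,
    ⟨((H1 G A v Hc.toContinuousMap p0 hv hc0 hc1).trans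
      (H2 G A v Hc.toContinuousMap p0 hv hc0 hc1)).trans
      (H3 G A u v Hc.toContinuousMap p0 hv hu hun hc0 hc1)⟩⟩

lemma GoodSet.contractible {G : SimpleGraph V} {A : Set V} (h : GoodSet G A) :
    ContractibleSpace (indepComplexOn G A).space := by
  induction h with
  | isolated A u hu hiso => exact isolated_contractible G A u hu hiso
  | step A u v hu hv huv hun _ ih => exact step_contractible G A u v hu hv huv hun ih

end HomotopySec
section TreeSec

variable {V : Type} [DecidableEq V] {G : SimpleGraph V}

/-- Connectivity within a vertex subset. -/
def ConnIn (G : SimpleGraph V) (A : Set V) (x y : V) : Prop :=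
  ∃ w : G.Walk x y, ∀ z ∈ w.support, z ∈ A

lemma path_length_eq_dist (ht : G.IsTree) {x y : V} (p : G.Walk x y) (hp : p.IsPath) :
    p.length = G.dist x y := by
  have hr : G.Reachable x y := ⟨p⟩
  obtain ⟨q, hq⟩ := hr.exists_walk_length_eq_dist
  have hq' : q.bypass.IsPath := SimpleGraph.Walk.bypass_isPath q
  have hpq : p = q.bypass :=
    Subtype.ext_iff.1 (ht.IsAcyclic.path_unique ⟨p, hp⟩ ⟨q.bypass, hq'⟩)
  have h1 : p.length ≤ G.dist x y := by
    rw [hpq, ← hq]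
    exact SimpleGraph.Walk.length_bypass_le q
  exact le_antisymm h1 (SimpleGraph.dist_le p)

lemma dist_le_of_mem_support {x y z : V} (p : G.Walk x y) (hz : z ∈ p.support) :
    G.dist x z ≤ p.length :=
  le_trans (SimpleGraph.dist_le (p.takeUntil z hz)) (SimpleGraph.Walk.length_takeUntil_le p hz)

lemma dist_lt_of_mem_support {x y z : V} (p : G.Walk x y) (hz : z ∈ p.support) (hne : z ≠ y) :
    G.dist x z < p.length := by
  have hsp := p.take_spec hz
  have hlen : (p.takeUntil z hz).length + (p.dropUntil z hz).length = p.length := by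
    rw [← SimpleGraph.Walk.length_append, hsp]
  have hd : (p.dropUntil z hz).length ≠ 0 := by
    intro h0
    exact hne (SimpleGraph.Walk.eq_of_length_eq_zero h0)
  have := SimpleGraph.dist_le (p.takeUntil z hz)
  omega

lemma concat_path {x y z : V} {p : G.Walk x y} (hp : p.IsPath) (ha : G.Adj y z)
    (hz : z ∉ p.support) : (p.concat ha).IsPath := by
  have h1 : (p.concat ha).reverse.IsPath := by
    rw [SimpleGraph.Walk.reverse_concat, SimpleGraph.Walk.cons_isPath_iff]
    exact ⟨hp.reverse, by rwa [SimpleGraph.Walk.support_reverse, List.mem_reverse]⟩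
  rwa [SimpleGraph.Walk.isPath_reverse_iff] at h1

lemma adj_dist_cases (ht : G.IsTree) (x : V) {y z : V} (ha : G.Adj y z) :
    G.dist x z + 1 = G.dist x y ∨ G.dist x y + 1 = G.dist x z := by
  obtain ⟨p, hp, hlp⟩ := (ht.isConnected.preconnected x y).exists_path_of_dist
  by_cases hz : z ∈ p.support
  · left
    have hzy : y ≠ z := G.ne_of_adj ha
    have hq : (p.takeUntil z hz).IsPath := hp.takeUntil hz
    have hql : (p.takeUntil z hz).length = G.dist x z := path_length_eq_dist ht _ hq
    have hyq : y ∉ (p.takeUntil z hz).support := by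
      intro hy
      have h1 : G.dist x y < (p.takeUntil z hz).length :=
        dist_lt_of_mem_support _ hy hzy
      have h2 : (p.takeUntil z hz).length ≤ p.length :=
        SimpleGraph.Walk.length_takeUntil_le p hz
      omega
    have hcp : ((p.takeUntil z hz).concat ha.symm).IsPath := concat_path hq ha.symm hyq
    have heq : (p.takeUntil z hz).concat ha.symm = p :=
      Subtype.ext_iff.1 (ht.IsAcyclic.path_unique ⟨_, hcp⟩ ⟨p, hp⟩)
    have hlen := congrArg SimpleGraph.Walk.length heq
    rw [SimpleGraph.Walk.length_concat] at hlen
    omega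
  · right
    have hcp : (p.concat ha).IsPath := concat_path hp ha hz
    have := path_length_eq_dist ht (p.concat ha) hcp
    rw [SimpleGraph.Walk.length_concat, hlp] at this
    omega

lemma parent_unique (ht : G.IsTree) (x : V) {y z₁ z₂ : V} (h₁ : G.Adj y z₁) (h₂ : G.Adj y z₂)
    (d₁ : G.dist x z₁ + 1 = G.dist x y) (d₂ : G.dist x z₂ + 1 = G.dist x y) : z₁ = z₂ := by
  obtain ⟨q₁, hq₁, hl₁⟩ := (ht.isConnected.preconnected x z₁).exists_path_of_dist
  obtain ⟨q₂, hq₂, hl₂⟩ := (ht.isConnected.preconnected x z₂).exists_path_of_dist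
  have hy₁ : y ∉ q₁.support := by
    intro hy
    have := dist_le_of_mem_support q₁ hy
    omega
  have hy₂ : y ∉ q₂.support := by
    intro hy
    have := dist_le_of_mem_support q₂ hy
    omega
  have hcp₁ : (q₁.concat h₁.symm).IsPath := concat_path hq₁ h₁.symm hy₁
  have hcp₂ : (q₂.concat h₂.symm).IsPath := concat_path hq₂ h₂.symm hy₂
  have heq : q₁.concat h₁.symm = q₂.concat h₂.symm :=
    Subtype.ext_iff.1 (ht.IsAcyclic.path_unique ⟨_, hcp₁⟩ ⟨_, hcp₂⟩)
  obtain ⟨hv, -⟩ := SimpleGraph.Walk.concat_inj heq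
  exact hv

/-- Extract the neighbour of `y` on the unique path from `x`, staying inside `A`. -/
lemma exists_parent (ht : G.IsTree) (A : Set V) {x y : V} (hxy : x ≠ y)
    (hC : ConnIn G A x y) :
    ∃ v, G.Adj y v ∧ v ∈ A ∧ G.dist x v + 1 = G.dist x y := by
  obtain ⟨W, hWs⟩ := hC
  have hpp : W.bypass.IsPath := W.bypass_isPath
  have hps : ∀ z ∈ W.bypass.support, z ∈ A := fun z hz => hWs z (W.support_bypass_subset hz)
  have hpl : W.bypass.length = G.dist x y := path_length_eq_dist ht _ hpp
  obtain ⟨v, hadj, q', hq'⟩ := SimpleGraph.Walk.exists_eq_cons_of_ne (Ne.symm hxy) W.bypass.reverse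
  refine ⟨v, hadj, ?_, ?_⟩
  · have hv1 : v ∈ q'.support := SimpleGraph.Walk.start_mem_support q'
    have hv2 : v ∈ W.bypass.reverse.support := by
      rw [hq', SimpleGraph.Walk.support_cons]
      exact List.mem_cons_of_mem _ hv1
    rw [SimpleGraph.Walk.support_reverse, List.mem_reverse] at hv2
    exact hps v hv2
  · have hqp : q'.reverse.IsPath := by
      have hrp : W.bypass.reverse.IsPath := hpp.reverse
      rw [hq', SimpleGraph.Walk.cons_isPath_iff] at hrp
      exact hrp.1.reverse
    have hdl : q'.reverse.length = G.dist x v := path_length_eq_dist ht _ hqp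
    have h1 : W.bypass.reverse.length = q'.length + 1 := by
      rw [hq', SimpleGraph.Walk.length_cons]
    have h2 : W.bypass.reverse.length = W.bypass.length := SimpleGraph.Walk.length_reverse _
    have h3 : q'.reverse.length = q'.length := SimpleGraph.Walk.length_reverse _
    omega

end TreeSec

section MainSec

variable {V : Type} [Fintype V] [DecidableEq V] {G : SimpleGraph V}

lemma goodSet_of_inv (ht : G.IsTree) (x : V) :
    ∀ (n : ℕ) (A : Set V), A.ncard ≤ n → x ∈ A →
      (∀ y ∈ A, ConnIn G A x y →
        (∃ z ∈ A, G.Adj y z ∧ ∀ w ∈ A, G.Adj y w → w = z) → 3 ∣ G.dist x y) →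
      GoodSet G A := by
  intro n
  induction n with
  | zero =>
    intro A hcard hx _
    exfalso
    have h0 : A.ncard = 0 := le_antisymm hcard (Nat.zero_le _)
    have hA : A = ∅ := (Set.ncard_eq_zero (Set.toFinite A)).1 h0
    rw [hA] at hx
    exact hx
  | succ n ih =>
    intro A hcard hx hinv
    classical
    have hxC : ConnIn G A x x :=
      ⟨SimpleGraph.Walk.nil, by intro z hz; simp at hz; rwa [hz]⟩
    set F : Finset V := Finset.univ.filter (fun y => y ∈ A ∧ ConnIn G A x y) with hF
    have hxF : x ∈ F := by
      rw [hF, Finset.mem_filter]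
      exact ⟨Finset.mem_univ x, hx, hxC⟩
    obtain ⟨y₀, hy₀F, hmax⟩ := F.exists_max_image (fun y => G.dist x y) ⟨x, hxF⟩
    rw [hF, Finset.mem_filter] at hy₀F
    obtain ⟨-, hy₀A, hy₀C⟩ := hy₀F
    have hmax' : ∀ w ∈ A, ConnIn G A x w → G.dist x w ≤ G.dist x y₀ := by
      intro w hwA hwC
      exact hmax w (by rw [hF, Finset.mem_filter]; exact ⟨Finset.mem_univ w, hwA, hwC⟩)
    by_cases hd0 : G.dist x y₀ = 0
    · refine GoodSet.isolated A x hx ?_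
      intro w hwA hadj
      have hwC : ConnIn G A x w := ⟨SimpleGraph.Walk.cons hadj SimpleGraph.Walk.nil, by
        intro z hz
        simp [SimpleGraph.Walk.support_cons] at hz
        rcases hz with rfl | rfl
        exacts [hx, hwA]⟩
      have hle := hmax' w hwA hwC
      have hne : G.dist x w ≠ 0 := by
        intro he
        have hxw : x = w := ht.isConnected.dist_eq_zero_iff.mp he
        rw [hxw] at hadj
        exact G.irrefl hadj
      omega
    · have hxy : x ≠ y₀ := by
        intro he
        rw [← he, SimpleGraph.dist_self] at hd0
        exact hd0 rfl
      obtain ⟨v, hadj, hvA, hdv⟩ := exists_parent ht A hxy hy₀C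
      have huniq : ∀ w ∈ A, G.Adj y₀ w → w = v := by
        intro w hwA hadj'
        obtain ⟨W, hWs⟩ := hy₀C
        have hwC : ConnIn G A x w := ⟨W.concat hadj', by
          intro z hz
          rw [SimpleGraph.Walk.support_concat] at hz
          rcases List.mem_append.1 hz with hz | hz
          · exact hWs z hz
          · rw [List.mem_singleton] at hz; rwa [hz]⟩
        have hle := hmax' w hwA hwC
        rcases adj_dist_cases ht x hadj' with hc | hc
        · exact parent_unique ht x hadj' hadj hc hdv
        · omega
      have h3d : (3:ℕ) ∣ G.dist x y₀ := hinv y₀ hy₀A hy₀C ⟨v, hvA, hadj, huniq⟩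
      have hd3 : 3 ≤ G.dist x y₀ := by omega
      have hxv : x ∉ stSet G v := by
        intro hst
        rcases Set.mem_insert_iff.1 hst with he | he
        · have h0 : G.dist x v = 0 := by rw [he]; exact SimpleGraph.dist_self
          omega
        · have h1 : G.dist x v ≤ 1 := by
            have := SimpleGraph.dist_le (SimpleGraph.Walk.cons (G.adj_symm he) SimpleGraph.Walk.nil)
            simpa using this
          omega
      refine GoodSet.step A y₀ v hy₀A hvA hadj huniq ?_
      apply ih
      · have hlt : (A \ stSet G v).ncard < A.ncard := by
          apply Set.ncard_lt_ncard ?_ (Set.toFinite A)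
          constructor
          · exact Set.diff_subset
          · intro hsup
            exact (hsup hvA).2 (Set.mem_insert v _)
        omega
      · exact ⟨hx, hxv⟩
      · intro y' hy'A' hy'C hleaf
        have hy'C_A : ConnIn G A x y' := by
          obtain ⟨W₂, hW₂⟩ := hy'C
          exact ⟨W₂, fun z hz => (hW₂ z hz).1⟩
        have hy'A : y' ∈ A := hy'A'.1
        have hled : G.dist x y' ≤ G.dist x y₀ := hmax' y' hy'A hy'C_A
        by_cases hcs : ∃ cc ∈ A, cc ∈ stSet G v ∧ G.Adj y' cc
        · obtain ⟨cc, hccA, hccst, hccadj⟩ := hcs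
          rcases Set.mem_insert_iff.1 hccst with he | he
          · exfalso
            rw [he] at hccadj
            exact hy'A'.2 (Set.mem_insert_iff.2 (Or.inr hccadj.symm))
          · have hAdjvcc : G.Adj v cc := he
            rcases adj_dist_cases ht x hAdjvcc with hc1 | hc1
            · rcases adj_dist_cases ht x hccadj with hc2 | hc2
              · exfalso
                have hxy' : x ≠ y' := by
                  intro hexy
                  rw [← hexy, SimpleGraph.dist_self] at hc2
                  omega
                obtain ⟨z', hadjz', hz'A', hdz'⟩ := exists_parent ht (A \ stSet G v) hxy' hy'C
                have hzc : z' = cc := parent_unique ht x hadjz' hccadj hdz' hc2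
                rw [hzc] at hz'A'
                exact hz'A'.2 hccst
              · omega
            · rcases adj_dist_cases ht x hccadj with hc2 | hc2
              · omega
              · exfalso
                have hyv : y' = v := parent_unique ht x hccadj.symm hAdjvcc.symm hc2 hc1
                rw [hyv] at hy'A'
                exact hy'A'.2 (Set.mem_insert v _)
        · push_neg at hcs
          obtain ⟨z', hz'A', hz'adj, hz'uniq⟩ := hleaf
          refine hinv y' hy'A hy'C_A ⟨z', hz'A'.1, hz'adj, ?_⟩
          intro w hwA hwadj
          have hwst : w ∉ stSet G v := fun hst => hcs w hwA hst hwadj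
          exact hz'uniq w ⟨hwA, hwst⟩ hwadj

end MainSec

end IndepProofAux


/-- If a finite tree has a vertex `x` such that every path from `x` to
a leaf has length divisible by 3, then its independence complex is contractible. -/
theorem indep_tree_contractible {V : Type} [Fintype V] (G : SimpleGraph V)
    (h : G.IsTree) (x : V)
    (hx : ∀ (l : V) (p : G.Walk x l), (∃! u, G.Adj l u) → p.IsPath → 3 ∣ p.length) :
    ContractibleSpace (indepComplex G).space := by
  classical
  have hGood : IndepProofAux.GoodSet G Set.univ := by
    apply IndepProofAux.goodSet_of_inv h x (Set.univ : Set V).ncard Set.univ le_rfl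
      (Set.mem_univ x)
    intro y _ _ hleaf
    obtain ⟨z, -, hz, huniq⟩ := hleaf
    obtain ⟨p, hp, hlen⟩ := (h.isConnected.preconnected x y).exists_path_of_dist
    have h3 := hx y p ⟨z, hz, fun w hw => huniq w (Set.mem_univ w) hw⟩ hp
    rwa [IndepProofAux.path_length_eq_dist h p hp] at h3
  exact hGood.contractible
end

section
/- (Csorba's theorem) Let H be a graph and let G be obtained from H by subdividing one edge into a path of four edges (i.e., replacing edge uv by a path u – a – b – c – v with three new vertices). Then I_G is homotopy equivalent to the suspension Σ I_H. -/
open scoped unitInterval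

/-! ### Auxiliary infrastructure -/

section Infra

variable {α : Type*} [Fintype α]

/-- The support of a weight function, as a `Finset`. -/
noncomputable def fsupp (f : α → ℝ) : Finset α :=
  (Set.toFinite (Function.support f)).toFinset

@[simp] lemma mem_fsupp {f : α → ℝ} {x : α} : x ∈ fsupp f ↔ f x ≠ 0 := by
  simp [fsupp, Function.support]

lemma mem_space_iff (K : AbsSimplicialComplex α) (f : α → ℝ) :
    ((∀ x, 0 ≤ f x) ∧ ∃ s ∈ K.faces, (∀ x ∉ s, f x = 0) ∧ ∑ x ∈ s, f x = 1)
      ↔ (∀ x, 0 ≤ f x) ∧ fsupp f ∈ K.faces ∧ ∑ x, f x = 1 := by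
  constructor
  · rintro ⟨h0, s, hs, hz, h1⟩
    refine ⟨h0, K.down_closed hs ?_, ?_⟩
    · intro x hx
      rw [mem_fsupp] at hx
      by_contra hxs
      exact hx (hz x hxs)
    · rw [← h1]
      exact (Finset.sum_subset (Finset.subset_univ s)
        (fun x _ hxs => hz x hxs)).symm
  · rintro ⟨h0, hs, h1⟩
    refine ⟨h0, fsupp f, hs, fun x hx => by simpa using hx, ?_⟩
    rw [← h1]
    exact Finset.sum_subset (Finset.subset_univ _)
      (fun x _ hxs => by simpa using hxs)

/-- Constructor for points of the realization. -/
noncomputable def mkPt (K : AbsSimplicialComplex α) (f : α → ℝ)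
    (h0 : ∀ x, 0 ≤ f x) (hs : fsupp f ∈ K.faces) (h1 : ∑ x, f x = 1) :
    K.space :=
  ⟨f, (mem_space_iff K f).mpr ⟨h0, hs, h1⟩⟩

@[simp] lemma mkPt_coe (K : AbsSimplicialComplex α) (f : α → ℝ) (h0 hs h1) :
    (mkPt K f h0 hs h1).1 = f := rfl

lemma space_nonneg {K : AbsSimplicialComplex α} (p : K.space) : ∀ x, 0 ≤ p.1 x :=
  p.2.1

lemma space_supp_mem {K : AbsSimplicialComplex α} (p : K.space) :
    fsupp p.1 ∈ K.faces :=
  (((mem_space_iff K p.1).mp p.2)).2.1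

lemma space_sum {K : AbsSimplicialComplex α} (p : K.space) : ∑ x, p.1 x = 1 :=
  (((mem_space_iff K p.1).mp p.2)).2.2

/-- faces of an independence complex. -/
lemma indep_faces_iff {β : Type*} (H : SimpleGraph β) (s : Finset β) :
    s ∈ (indepComplex H).faces ↔ ∀ a ∈ s, ∀ b ∈ s, ¬ H.Adj a b := by
  constructor
  · exact fun hs => hs.2
  · exact fun hs => ⟨fun x _ => trivial, hs⟩

/-- Independence of supports of points in an independence complex. -/
lemma space_indep {β : Type*} [Fintype β] {H : SimpleGraph β}
    (p : (indepComplex H).space) {a b : β} (ha : p.1 a ≠ 0) (hb : p.1 b ≠ 0) :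
    ¬ H.Adj a b :=
  ((indep_faces_iff H _).mp (space_supp_mem p)) a (by simpa using ha) b (by simpa using hb)

lemma space_pair {β : Type*} [Fintype β] {H : SimpleGraph β}
    (p : (indepComplex H).space) {a b : β} (hadj : H.Adj a b) :
    p.1 a = 0 ∨ p.1 b = 0 := by
  by_contra hc
  push_neg at hc
  exact space_indep p hc.1 hc.2 hadj

/-- compactness of realizations over finite vertex sets. -/
instance space_compact (K : AbsSimplicialComplex α) : CompactSpace K.space := by
  have hc : IsCompact {f : α → ℝ | (∀ x, 0 ≤ f x) ∧
      ∃ s ∈ K.faces, (∀ x ∉ s, f x = 0) ∧ ∑ x ∈ s, f x = 1} := by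
    have : {f : α → ℝ | (∀ x, 0 ≤ f x) ∧
        ∃ s ∈ K.faces, (∀ x ∉ s, f x = 0) ∧ ∑ x ∈ s, f x = 1} =
        ⋃ s ∈ K.faces, {f : α → ℝ | (∀ x, 0 ≤ f x) ∧ (∀ x ∉ s, f x = 0) ∧
          ∑ x ∈ s, f x = 1} := by
      ext f
      simp only [Set.mem_setOf_eq, Set.mem_iUnion]
      constructor
      · rintro ⟨h0, s, hs, h⟩; exact ⟨s, hs, h0, h⟩
      · rintro ⟨s, hs, h0, h⟩; exact ⟨h0, s, hs, h⟩
    rw [this]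
    apply (Set.toFinite K.faces).isCompact_biUnion
    intro s _
    have hcl : IsClosed {f : α → ℝ | (∀ x, 0 ≤ f x) ∧ (∀ x ∉ s, f x = 0) ∧
        ∑ x ∈ s, f x = 1} := by
      have e1 : {f : α → ℝ | (∀ x, 0 ≤ f x) ∧ (∀ x ∉ s, f x = 0) ∧
          ∑ x ∈ s, f x = 1} =
          {f : α → ℝ | ∀ x, 0 ≤ f x} ∩ ({f : α → ℝ | ∀ x ∉ s, f x = 0} ∩
            {f : α → ℝ | ∑ x ∈ s, f x = 1}) := rfl
      rw [e1]
      refine IsClosed.inter ?_ (IsClosed.inter ?_ ?_)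
      · have e0 : {f : α → ℝ | ∀ x, 0 ≤ f x} = ⋂ x, {f : α → ℝ | 0 ≤ f x} := by
          ext f; simp
        rw [e0]
        exact isClosed_iInter fun x => isClosed_le continuous_const (continuous_apply x)
      · have e2 : {f : α → ℝ | ∀ x ∉ s, f x = 0} =
            ⋂ x ∈ (↑s : Set α)ᶜ, {f : α → ℝ | f x = 0} := by
          ext f; simp
        rw [e2]
        exact isClosed_biInter fun x _ => isClosed_eq (continuous_apply x) continuous_const
      · exact isClosed_eq (continuous_finset_sum s fun x _ => continuous_apply x)
          continuous_const
    have hsub : {f : α → ℝ | (∀ x, 0 ≤ f x) ∧ (∀ x ∉ s, f x = 0) ∧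
        ∑ x ∈ s, f x = 1} ⊆ Set.pi Set.univ (fun _ : α => Set.Icc (0:ℝ) 1) := by
      intro f hf
      rw [Set.mem_univ_pi]
      intro x
      constructor
      · exact hf.1 x
      · by_cases hx : x ∈ s
        · calc f x ≤ ∑ y ∈ s, f y :=
              Finset.single_le_sum (fun y _ => hf.1 y) hx
            _ = 1 := hf.2.2
        · rw [hf.2.1 x hx]; exact zero_le_one
    exact IsCompact.of_isClosed_subset
      (isCompact_univ_pi (fun _ : α => isCompact_Icc (a := (0:ℝ)) (b := 1))) hcl hsub
  exact isCompact_iff_compactSpace.mp hc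

end Infra

/-! ### The weight-splitting function and straight-line homotopies -/

/-- Splitting function for pole weights. -/
noncomputable def tA (hu hv τ : ℝ) : ℝ :=
  min hv τ + (τ + max (τ - 2 * min hu τ) 0 - max (τ - 2 * min hv τ) 0) / 2

lemma tA_nonneg {hu hv τ : ℝ} (h1 : 0 ≤ hu) (h2 : 0 ≤ hv) (h3 : 0 ≤ τ) :
    0 ≤ tA hu hv τ := by
  have m1 : 0 ≤ min hu τ := le_min h1 h3
  have m2 : 0 ≤ min hv τ := le_min h2 h3
  have b1 : max (τ - 2 * min hv τ) 0 ≤ τ := max_le (by linarith) h3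
  have b2 : (0:ℝ) ≤ max (τ - 2 * min hu τ) 0 := le_max_right _ _
  unfold tA
  linarith

lemma tA_add (hu hv τ : ℝ) :
    tA hu hv τ + tA hv hu τ = τ + min hu τ + min hv τ := by
  unfold tA; ring

lemma tA_zero {hu hv : ℝ} (h1 : 0 ≤ hu) (h2 : 0 ≤ hv) : tA hu hv 0 = 0 := by
  unfold tA
  rw [min_eq_right h1, min_eq_right h2]
  norm_num

lemma tA_eq_zero_left {hu hv τ : ℝ} (h2 : 0 ≤ hv) (h3 : 0 ≤ τ)
    (hd : hu = 0 ∨ hv = 0) (hlt : min hu τ < hu) : tA hu hv τ = 0 := by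
  have hminu : min hu τ = τ := by
    rcases min_cases hu τ with ⟨he, _⟩ | ⟨he, _⟩
    · rw [he] at hlt; exact absurd hlt (lt_irrefl _)
    · exact he
  have hτu : τ < hu := by rw [hminu] at hlt; exact hlt
  have hv0 : hv = 0 := by
    rcases hd with h | h
    · exfalso; rw [h] at hτu; linarith
    · exact h
  subst hv0
  unfold tA
  rw [hminu, min_eq_left h3]
  rw [max_eq_right (by linarith : τ - 2 * τ ≤ 0), max_eq_left (by linarith : (0:ℝ) ≤ τ - 2*0)]
  ring

lemma tA_ne_zero_pos {hu hv τ : ℝ} (h1 : 0 ≤ hu) (h2 : 0 ≤ hv) (h3 : 0 ≤ τ)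
    (hne : tA hu hv τ ≠ 0) : τ ≠ 0 := by
  intro hτ
  subst hτ
  exact hne (tA_zero h1 h2)

section LineHomotopy

variable {α : Type*} [Fintype α] [DecidableEq α] {X : Type*} [TopologicalSpace X]

lemma fsupp_combo_subset (f g : α → ℝ) (t : ℝ) :
    fsupp (fun x => (1 - t) * f x + t * g x) ⊆ fsupp f ∪ fsupp g := by
  intro x hx
  rw [mem_fsupp] at hx
  rw [Finset.mem_union, mem_fsupp, mem_fsupp]
  by_contra hc
  push_neg at hc
  rw [hc.1, hc.2] at hx
  simp at hx

/-- The straight-line homotopy between two maps into a realization, given that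
supports of corresponding values always span a common face. -/
noncomputable def lineHomotopy {K : AbsSimplicialComplex α} (F G : C(X, K.space))
    (hface : ∀ x : X, fsupp (F x).1 ∪ fsupp (G x).1 ∈ K.faces) :
    F.Homotopy G where
  toFun := fun p =>
    mkPt K (fun w => (1 - (p.1 : ℝ)) * (F p.2).1 w + (p.1 : ℝ) * (G p.2).1 w)
      (fun w => add_nonneg
        (mul_nonneg (by linarith [(p.1).2.2]) (space_nonneg _ w))
        (mul_nonneg (p.1).2.1 (space_nonneg _ w)))
      (K.down_closed (hface p.2) (fsupp_combo_subset _ _ _))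
      (by
        rw [Finset.sum_add_distrib, ← Finset.mul_sum, ← Finset.mul_sum,
          space_sum, space_sum]
        ring)
  continuous_toFun := by
    apply Continuous.subtype_mk
    apply continuous_pi
    intro w
    have hF : Continuous fun p : I × X => (F p.2).1 w :=
      ((continuous_apply w).comp (continuous_subtype_val.comp
        (F.continuous.comp continuous_snd)))
    have hG : Continuous fun p : I × X => (G p.2).1 w :=
      ((continuous_apply w).comp (continuous_subtype_val.comp
        (G.continuous.comp continuous_snd)))
    have ht : Continuous fun p : I × X => (p.1 : ℝ) :=
      continuous_subtype_val.comp continuous_fst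
    continuity
  map_zero_left := by
    intro x
    apply Subtype.ext
    simp [mkPt]
  map_one_left := by
    intro x
    apply Subtype.ext
    simp [mkPt]

/-! ### The specific maps for Csorba's theorem -/

section Csorba

variable {V : Type} [Fintype V] [DecidableEq V]

/-- The map collapsing the subdivision complex onto the suspension model. -/
noncomputable def phiFun (u v : V) (f : V ⊕ Fin 3 → ℝ) : V ⊕ Bool → ℝ :=
  fun w => match w with
  | .inl x => f (.inl x) - (if x = u then min (f (.inl u)) (f (.inl v)) else 0)
      - (if x = v then min (f (.inl u)) (f (.inl v)) else 0)
  | .inr false => f (.inr 1) + 2 * min (f (.inl u)) (f (.inl v))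
  | .inr true => f (.inr 0) + f (.inr 2)

/-- The homotopy inverse, from the suspension model into the subdivision complex. -/
noncomputable def psiFun (u v : V) (g : V ⊕ Bool → ℝ) : V ⊕ Fin 3 → ℝ :=
  fun w => match w with
  | .inl x => g (.inl x) - (if x = u then min (g (.inl u)) (g (.inr true)) else 0)
      - (if x = v then min (g (.inl v)) (g (.inr true)) else 0)
  | .inr i => if i = 0 then tA (g (.inl u)) (g (.inl v)) (g (.inr true))
      else if i = 1 then g (.inr false)
      else tA (g (.inl v)) (g (.inl u)) (g (.inr true))

/-- Intermediate retraction used in the homotopy `psi ∘ phi ≃ id`. -/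
noncomputable def rFun (u v : V) (f : V ⊕ Fin 3 → ℝ) : V ⊕ Fin 3 → ℝ :=
  fun w => match w with
  | .inl x => f (.inl x) - (if x = u then min (f (.inl u)) (f (.inr 0) + f (.inr 2)) else 0)
      - (if x = v then min (f (.inl v)) (f (.inr 0) + f (.inr 2)) else 0)
  | .inr i => if i = 0 then f (.inr 0) + min (f (.inl v)) (f (.inr 0) + f (.inr 2))
      else if i = 1 then f (.inr 1)
      else f (.inr 2) + min (f (.inl u)) (f (.inr 0) + f (.inr 2))

variable {u v : V}

@[simp] lemma phiFun_inl (f : V ⊕ Fin 3 → ℝ) (x : V) :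
    phiFun u v f (.inl x) = f (.inl x) - (if x = u then min (f (.inl u)) (f (.inl v)) else 0)
      - (if x = v then min (f (.inl u)) (f (.inl v)) else 0) := rfl

@[simp] lemma phiFun_false (f : V ⊕ Fin 3 → ℝ) :
    phiFun u v f (.inr false) = f (.inr 1) + 2 * min (f (.inl u)) (f (.inl v)) := rfl

@[simp] lemma phiFun_true (f : V ⊕ Fin 3 → ℝ) :
    phiFun u v f (.inr true) = f (.inr 0) + f (.inr 2) := rfl

@[simp] lemma psiFun_inl (g : V ⊕ Bool → ℝ) (x : V) :
    psiFun u v g (.inl x) = g (.inl x) - (if x = u then min (g (.inl u)) (g (.inr true)) else 0)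
      - (if x = v then min (g (.inl v)) (g (.inr true)) else 0) := rfl

@[simp] lemma psiFun_a (g : V ⊕ Bool → ℝ) :
    psiFun u v g (.inr 0) = tA (g (.inl u)) (g (.inl v)) (g (.inr true)) := rfl

@[simp] lemma psiFun_b (g : V ⊕ Bool → ℝ) :
    psiFun u v g (.inr 1) = g (.inr false) := rfl

@[simp] lemma psiFun_c (g : V ⊕ Bool → ℝ) :
    psiFun u v g (.inr 2) = tA (g (.inl v)) (g (.inl u)) (g (.inr true)) := rfl

@[simp] lemma rFun_inl (f : V ⊕ Fin 3 → ℝ) (x : V) :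
    rFun u v f (.inl x) = f (.inl x)
      - (if x = u then min (f (.inl u)) (f (.inr 0) + f (.inr 2)) else 0)
      - (if x = v then min (f (.inl v)) (f (.inr 0) + f (.inr 2)) else 0) := rfl

@[simp] lemma rFun_a (f : V ⊕ Fin 3 → ℝ) :
    rFun u v f (.inr 0) = f (.inr 0) + min (f (.inl v)) (f (.inr 0) + f (.inr 2)) := rfl

@[simp] lemma rFun_b (f : V ⊕ Fin 3 → ℝ) :
    rFun u v f (.inr 1) = f (.inr 1) := rfl

@[simp] lemma rFun_c (f : V ⊕ Fin 3 → ℝ) :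
    rFun u v f (.inr 2) = f (.inr 2) + min (f (.inl u)) (f (.inr 0) + f (.inr 2)) := rfl

lemma sum_V_sub_ite (hne : u ≠ v) (g : V → ℝ) (A B : ℝ) :
    ∑ x, (g x - (if x = u then A else 0) - (if x = v then B else 0))
      = (∑ x, g x) - A - B := by
  rw [Finset.sum_sub_distrib, Finset.sum_sub_distrib]
  congr 1
  · congr 1
    rw [Finset.sum_ite_eq' Finset.univ u (fun _ => A)]
    simp
  · rw [Finset.sum_ite_eq' Finset.univ v (fun _ => B)]
    simp

lemma sum_phiFun (hne : u ≠ v) (f : V ⊕ Fin 3 → ℝ) :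
    ∑ w, phiFun u v f w = ∑ w, f w := by
  rw [Fintype.sum_sum_type, Fintype.sum_sum_type]
  have hb : ∑ b : Bool, phiFun u v f (.inr b) =
      phiFun u v f (.inr true) + phiFun u v f (.inr false) := by
    simp [Fintype.univ_bool]
  have hf3 : ∑ i : Fin 3, f (.inr i) = f (.inr 0) + f (.inr 1) + f (.inr 2) :=
    Fin.sum_univ_three _
  rw [hb, hf3, phiFun_true, phiFun_false]
  have := sum_V_sub_ite (u := u) (v := v) hne (fun x => f (.inl x))
    (min (f (.inl u)) (f (.inl v))) (min (f (.inl u)) (f (.inl v)))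
  simp only [phiFun_inl]
  rw [this]
  ring

lemma sum_psiFun (hne : u ≠ v) (g : V ⊕ Bool → ℝ) :
    ∑ w, psiFun u v g w = ∑ w, g w := by
  rw [Fintype.sum_sum_type, Fintype.sum_sum_type]
  have hb : ∑ b : Bool, g (.inr b) = g (.inr true) + g (.inr false) := by
    simp [Fintype.univ_bool]
  have hf3 : ∑ i : Fin 3, psiFun u v g (.inr i) =
      psiFun u v g (.inr 0) + psiFun u v g (.inr 1) + psiFun u v g (.inr 2) :=
    Fin.sum_univ_three _
  rw [hb, hf3, psiFun_a, psiFun_b, psiFun_c]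
  have := sum_V_sub_ite (u := u) (v := v) hne (fun x => g (.inl x))
    (min (g (.inl u)) (g (.inr true))) (min (g (.inl v)) (g (.inr true)))
  simp only [psiFun_inl]
  rw [this]
  have := tA_add (g (.inl u)) (g (.inl v)) (g (.inr true))
  linarith

lemma sum_rFun (hne : u ≠ v) (f : V ⊕ Fin 3 → ℝ) :
    ∑ w, rFun u v f w = ∑ w, f w := by
  rw [Fintype.sum_sum_type, Fintype.sum_sum_type]
  have hf3 : ∑ i : Fin 3, rFun u v f (.inr i) =
      rFun u v f (.inr 0) + rFun u v f (.inr 1) + rFun u v f (.inr 2) :=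
    Fin.sum_univ_three _
  have hf3' : ∑ i : Fin 3, f (.inr i) = f (.inr 0) + f (.inr 1) + f (.inr 2) :=
    Fin.sum_univ_three _
  rw [hf3, hf3', rFun_a, rFun_b, rFun_c]
  have := sum_V_sub_ite (u := u) (v := v) hne (fun x => f (.inl x))
    (min (f (.inl u)) (f (.inr 0) + f (.inr 2)))
    (min (f (.inl v)) (f (.inr 0) + f (.inr 2)))
  simp only [rFun_inl]
  rw [this]
  ring

end Csorba

section Adj
variable {V : Type} [Fintype V] [DecidableEq V] (G : SimpleGraph V) (u v : V)

lemma sub4_adj_ll {x y : V} :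
    (subdivide4 G u v).Adj (.inl x) (.inl y) ↔
      (G.Adj x y ∧ ¬((x = u ∧ y = v) ∨ (x = v ∧ y = u))) := by
  show sRel G u v _ _ ∨ sRel G u v _ _ ↔ _
  simp only [sRel]
  constructor
  · rintro (⟨ha, hx⟩ | ⟨ha, hx⟩)
    · exact ⟨ha, hx⟩
    · exact ⟨ha.symm, fun hc => hx (by tauto)⟩
  · exact fun hx => Or.inl hx

lemma sub4_adj_li {x : V} {i : Fin 3} :
    (subdivide4 G u v).Adj (.inl x) (.inr i) ↔ ((x = u ∧ i = 0) ∨ (x = v ∧ i = 2)) := by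
  show sRel G u v _ _ ∨ sRel G u v _ _ ↔ _
  simp only [sRel]
  tauto

lemma sub4_adj_ii {i j : Fin 3} :
    (subdivide4 G u v).Adj (.inr i) (.inr j) ↔ ((i:ℕ) + 1 = j ∨ (j:ℕ) + 1 = i) := by
  show sRel G u v _ _ ∨ sRel G u v _ _ ↔ _
  simp only [sRel]

lemma adj_ua : (subdivide4 G u v).Adj (.inl u) (.inr 0) := by
  rw [sub4_adj_li]; exact Or.inl ⟨rfl, rfl⟩

lemma adj_vc : (subdivide4 G u v).Adj (.inl v) (.inr 2) := by
  rw [sub4_adj_li]; exact Or.inr ⟨rfl, rfl⟩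

lemma adj_ab : (subdivide4 G u v).Adj (.inr 0) (.inr 1) := by
  rw [sub4_adj_ii]; left; norm_num

lemma adj_bc : (subdivide4 G u v).Adj (.inr 1) (.inr 2) := by
  rw [sub4_adj_ii]; left; norm_num

lemma not_adj_uv : ¬ (subdivide4 G u v).Adj (.inl u) (.inl v) := by
  rw [sub4_adj_ll]; rintro ⟨-, hx⟩; exact hx (Or.inl ⟨rfl, rfl⟩)

lemma not_adj_ac : ¬ (subdivide4 G u v).Adj (.inr 0) (.inr 2) := by
  rw [sub4_adj_ii]; norm_num

lemma gsum_adj_ll {x y : V} :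
    (graphSum G (⊤ : SimpleGraph Bool)).Adj (.inl x) (.inl y) ↔ G.Adj x y := Iff.rfl

lemma gsum_adj_rr {b b' : Bool} :
    (graphSum G (⊤ : SimpleGraph Bool)).Adj (.inr b) (.inr b') ↔ b ≠ b' := Iff.rfl

lemma gsum_not_adj_lr {x : V} {b : Bool} :
    ¬ (graphSum G (⊤ : SimpleGraph Bool)).Adj (.inl x) (.inr b) := fun hc => hc

lemma gsum_not_adj_rl {x : V} {b : Bool} :
    ¬ (graphSum G (⊤ : SimpleGraph Bool)).Adj (.inr b) (.inl x) := fun hc => hc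

end Adj

section PhiMem
variable {V : Type} [Fintype V] [DecidableEq V] {G : SimpleGraph V} {u v : V}

lemma min_props_of_sub_ne {a b : ℝ} (hne : a - min a b ≠ 0) : min a b = b ∧ b < a := by
  rcases min_cases a b with ⟨he, _⟩ | ⟨he, hle⟩
  · rw [he] at hne; simp at hne
  · exact ⟨he, hle⟩

lemma min_ne_zero {a b : ℝ} (ha : 0 ≤ a) (hb : 0 ≤ b) (hne : min a b ≠ 0) :
    a ≠ 0 ∧ b ≠ 0 := by
  constructor
  · intro hx; rw [hx] at hne; rw [min_eq_left hb] at hne; exact hne rfl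
  · intro hx; rw [hx] at hne; rw [min_eq_right ha] at hne; exact hne rfl

lemma cont_ite {Y : Type*} [TopologicalSpace Y] (c : Prop) [Decidable c] (F : Y → ℝ)
    (hF : Continuous F) : Continuous (fun p : Y => if c then F p else 0) := by
  by_cases hc : c
  · simpa [hc] using hF
  · simp only [hc, if_false]
    exact continuous_const

lemma phi_inl_eq_zero (p : (indepComplex (subdivide4 G u v)).space) {x : V}
    (h0 : p.1 (.inl x) = 0) : phiFun u v p.1 (.inl x) = 0 := by
  have h2 : ∀ w, (0:ℝ) ≤ p.1 w := space_nonneg p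
  have hA : (if x = u then min (p.1 (.inl u)) (p.1 (.inl v)) else 0) = 0 := by
    by_cases hxu : x = u
    · rw [hxu] at h0
      rw [if_pos hxu, h0, min_eq_left (h2 _)]
    · rw [if_neg hxu]
  have hB : (if x = v then min (p.1 (.inl u)) (p.1 (.inl v)) else 0) = 0 := by
    by_cases hxv : x = v
    · rw [hxv] at h0
      rw [if_pos hxv, h0, min_eq_right (h2 _)]
    · rw [if_neg hxv]
  rw [phiFun_inl, hA, hB, h0]
  ring

lemma phi_inl_ne (p : (indepComplex (subdivide4 G u v)).space) {x : V}
    (hx : phiFun u v p.1 (.inl x) ≠ 0) : p.1 (.inl x) ≠ 0 :=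
  fun h0 => hx (phi_inl_eq_zero p h0)

lemma phi_nonneg (hG : G.Adj u v) (p : (indepComplex (subdivide4 G u v)).space) :
    ∀ w, 0 ≤ phiFun u v p.1 w := by
  have hne : u ≠ v := hG.ne
  have h2 : ∀ w, (0:ℝ) ≤ p.1 w := space_nonneg p
  have hml := min_le_left (p.1 (.inl u)) (p.1 (.inl v))
  have hmr := min_le_right (p.1 (.inl u)) (p.1 (.inl v))
  have hm0 : (0:ℝ) ≤ min (p.1 (.inl u)) (p.1 (.inl v)) := le_min (h2 _) (h2 _)
  rintro (x | b)
  · rw [phiFun_inl]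
    by_cases hxu : x = u
    · have hxv : ¬ x = v := fun hc => hne (hxu ▸ hc ▸ rfl)
      rw [if_pos hxu, if_neg hxv, hxu]
      linarith
    · by_cases hxv : x = v
      · rw [if_neg hxu, if_pos hxv, hxv]
        linarith
      · rw [if_neg hxu, if_neg hxv]
        have := h2 (Sum.inl x)
        linarith
  · cases b
    · rw [phiFun_false]
      have := h2 (Sum.inr 1)
      linarith
    · rw [phiFun_true]
      have := h2 (Sum.inr 0)
      have := h2 (Sum.inr 2)
      linarith

lemma phi_face (hG : G.Adj u v) (p : (indepComplex (subdivide4 G u v)).space) :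
    fsupp (phiFun u v p.1) ∈ (indepComplex (graphSum G (⊤ : SimpleGraph Bool))).faces := by
  have hne : u ≠ v := hG.ne
  have h2 : ∀ w, (0:ℝ) ≤ p.1 w := space_nonneg p
  rw [indep_faces_iff]
  intro a ha b hb hadj
  rw [mem_fsupp] at ha hb
  rcases a with x | s <;> rcases b with y | t
  · -- both equator vertices
    have hfx := phi_inl_ne p ha
    have hfy := phi_inl_ne p hb
    have hnadj := space_indep p hfx hfy
    rw [sub4_adj_ll] at hnadj
    have hGxy : G.Adj x y := hadj
    have hexc : (x = u ∧ y = v) ∨ (x = v ∧ y = u) := by tauto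
    rcases hexc with ⟨hx, hy⟩ | ⟨hx, hy⟩
    · rw [hx] at ha; rw [hy] at hb
      rw [phiFun_inl, if_pos rfl, if_neg hne] at ha
      rw [phiFun_inl, if_neg (Ne.symm hne), if_pos rfl] at hb
      have h3 := min_props_of_sub_ne (by simpa using ha)
      have h4 := min_props_of_sub_ne (a := p.1 (.inl v)) (b := p.1 (.inl u)) (by
        rw [min_comm]
        simpa using hb)
      linarith [h3.2, h4.2]
    · rw [hx] at ha; rw [hy] at hb
      rw [phiFun_inl, if_neg hne, if_pos rfl] at hb
      rw [phiFun_inl, if_neg (Ne.symm hne), if_pos rfl] at ha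
      have h3 := min_props_of_sub_ne (by simpa using hb)
      have h4 := min_props_of_sub_ne (a := p.1 (.inl v)) (b := p.1 (.inl u)) (by
        rw [min_comm]
        simpa using ha)
      linarith [h3.2, h4.2]
  · exact gsum_not_adj_lr G hadj
  · exact gsum_not_adj_rl G hadj
  · -- two poles
    have hst : s ≠ t := hadj
    have main : phiFun u v p.1 (.inr false) ≠ 0 → phiFun u v p.1 (.inr true) ≠ 0 → False := by
      intro hfalse htrue
      rw [phiFun_false] at hfalse
      rw [phiFun_true] at htrue
      have hbm : p.1 (.inr 1) ≠ 0 ∨ min (p.1 (.inl u)) (p.1 (.inl v)) ≠ 0 := by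
        by_contra hc
        push_neg at hc
        rw [hc.1, hc.2] at hfalse
        simp at hfalse
      have hac : p.1 (.inr 0) ≠ 0 ∨ p.1 (.inr 2) ≠ 0 := by
        by_contra hc
        push_neg at hc
        rw [hc.1, hc.2] at htrue
        simp at htrue
      rcases hbm with hbb | hmm
      · rcases hac with haa | hcc
        · rcases space_pair p (adj_ab G u v) with h5 | h5
          · exact haa h5
          · exact hbb h5
        · rcases space_pair p (adj_bc G u v) with h5 | h5
          · exact hbb h5
          · exact hcc h5
      · have huv := min_ne_zero (h2 _) (h2 _) hmm
        rcases hac with haa | hcc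
        · rcases space_pair p (adj_ua G u v) with h5 | h5
          · exact huv.1 h5
          · exact haa h5
        · rcases space_pair p (adj_vc G u v) with h5 | h5
          · exact huv.2 h5
          · exact hcc h5
    cases s <;> cases t
    · exact hst rfl
    · exact main ha hb
    · exact main hb ha
    · exact hst rfl

/-- The collapse map `Φ`. -/
noncomputable def phiMap (hG : G.Adj u v) : C((indepComplex (subdivide4 G u v)).space,
    (indepComplex (graphSum G (⊤ : SimpleGraph Bool))).space) where
  toFun p := mkPt _ (phiFun u v p.1) (phi_nonneg hG p) (phi_face hG p)
    (by rw [sum_phiFun hG.ne, space_sum])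
  continuous_toFun := by
    apply Continuous.subtype_mk
    apply continuous_pi
    intro w
    have hc : ∀ z : V ⊕ Fin 3,
        Continuous fun p : (indepComplex (subdivide4 G u v)).space => p.1 z := fun z =>
      (continuous_apply z).comp continuous_subtype_val
    rcases w with x | b
    · simp only [phiFun_inl]
      exact (((hc _).sub (cont_ite _ _ ((hc _).min (hc _)))).sub
        (cont_ite _ _ ((hc _).min (hc _))))
    · cases b
      · simp only [phiFun_false]
        exact ((hc _).add (continuous_const.mul ((hc _).min (hc _))))
      · simp only [phiFun_true]
        exact ((hc _).add (hc _))

end PhiMem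

section PsiMem
variable {V : Type} [Fintype V] [DecidableEq V] {G : SimpleGraph V} {u v : V}

@[simp] lemma psiFun_inr (g : V ⊕ Bool → ℝ) (i : Fin 3) :
    psiFun u v g (.inr i) = if i = 0 then tA (g (.inl u)) (g (.inl v)) (g (.inr true))
      else if i = 1 then g (.inr false)
      else tA (g (.inl v)) (g (.inl u)) (g (.inr true)) := rfl

@[simp] lemma rFun_inr (f : V ⊕ Fin 3 → ℝ) (i : Fin 3) :
    rFun u v f (.inr i) = if i = 0 then f (.inr 0) + min (f (.inl v)) (f (.inr 0) + f (.inr 2))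
      else if i = 1 then f (.inr 1)
      else f (.inr 2) + min (f (.inl u)) (f (.inr 0) + f (.inr 2)) := rfl

lemma gsum_adj_poles (G : SimpleGraph V) :
    (graphSum G (⊤ : SimpleGraph Bool)).Adj (.inr false) (.inr true) := by
  show (⊤ : SimpleGraph Bool).Adj false true
  simp

lemma fin3_adj_cases {i j : Fin 3} (hadj : (i:ℕ) + 1 = j ∨ (j:ℕ) + 1 = i) :
    (i = 0 ∧ j = 1) ∨ (i = 1 ∧ j = 2) ∨ (j = 0 ∧ i = 1) ∨ (j = 1 ∧ i = 2) := by
  revert hadj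
  revert i j
  decide

/-- exclusivity facts for a point of the suspension model. -/
lemma z_excl (hG : G.Adj u v)
    (g : (indepComplex (graphSum G (⊤ : SimpleGraph Bool))).space) :
    (g.1 (.inl u) = 0 ∨ g.1 (.inl v) = 0) ∧
      (g.1 (.inr false) = 0 ∨ g.1 (.inr true) = 0) :=
  ⟨space_pair g hG, space_pair g (gsum_adj_poles G)⟩

lemma psi_inl_eq_zero (g : (indepComplex (graphSum G (⊤ : SimpleGraph Bool))).space)
    {x : V} (h0 : g.1 (.inl x) = 0) : psiFun u v g.1 (.inl x) = 0 := by
  have h2 : ∀ w, (0:ℝ) ≤ g.1 w := space_nonneg g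
  have hA : (if x = u then min (g.1 (.inl u)) (g.1 (.inr true)) else 0) = 0 := by
    by_cases hxu : x = u
    · rw [hxu] at h0
      rw [if_pos hxu, h0, min_eq_left (h2 _)]
    · rw [if_neg hxu]
  have hB : (if x = v then min (g.1 (.inl v)) (g.1 (.inr true)) else 0) = 0 := by
    by_cases hxv : x = v
    · rw [hxv] at h0
      rw [if_pos hxv, h0, min_eq_left (h2 _)]
    · rw [if_neg hxv]
  rw [psiFun_inl, hA, hB, h0]
  ring

lemma psi_nonneg (hG : G.Adj u v)
    (g : (indepComplex (graphSum G (⊤ : SimpleGraph Bool))).space) :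
    ∀ w, 0 ≤ psiFun u v g.1 w := by
  have hne : u ≠ v := hG.ne
  have h2 : ∀ w, (0:ℝ) ≤ g.1 w := space_nonneg g
  rintro (x | i)
  · rw [psiFun_inl]
    by_cases hxu : x = u
    · have hxv : ¬ x = v := fun hc => hne (hxu ▸ hc ▸ rfl)
      rw [if_pos hxu, if_neg hxv, hxu]
      have := min_le_left (g.1 (.inl u)) (g.1 (.inr true))
      linarith
    · by_cases hxv : x = v
      · rw [if_neg hxu, if_pos hxv, hxv]
        have := min_le_left (g.1 (.inl v)) (g.1 (.inr true))
        linarith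
      · rw [if_neg hxu, if_neg hxv]
        have := h2 (Sum.inl x)
        linarith
  · rw [psiFun_inr]
    by_cases hi0 : i = 0
    · rw [if_pos hi0]
      exact tA_nonneg (h2 _) (h2 _) (h2 _)
    · by_cases hi1 : i = 1
      · rw [if_neg hi0, if_pos hi1]
        exact h2 _
      · rw [if_neg hi0, if_neg hi1]
        exact tA_nonneg (h2 _) (h2 _) (h2 _)

lemma psi_no_ua (hG : G.Adj u v)
    (g : (indepComplex (graphSum G (⊤ : SimpleGraph Bool))).space)
    (ha : psiFun u v g.1 (.inl u) ≠ 0) (hb : psiFun u v g.1 (.inr 0) ≠ 0) : False := by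
  have h2 : ∀ w, (0:ℝ) ≤ g.1 w := space_nonneg g
  have hne : u ≠ v := hG.ne
  rw [psiFun_inl, if_pos rfl, if_neg hne] at ha
  have hprop := min_props_of_sub_ne (by simpa using ha)
  rw [psiFun_a] at hb
  exact hb (tA_eq_zero_left (h2 _) (h2 _) (z_excl hG g).1 (by rw [hprop.1]; exact hprop.2))

lemma psi_no_vc (hG : G.Adj u v)
    (g : (indepComplex (graphSum G (⊤ : SimpleGraph Bool))).space)
    (ha : psiFun u v g.1 (.inl v) ≠ 0) (hb : psiFun u v g.1 (.inr 2) ≠ 0) : False := by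
  have h2 : ∀ w, (0:ℝ) ≤ g.1 w := space_nonneg g
  have hne : u ≠ v := hG.ne
  rw [psiFun_inl, if_neg (Ne.symm hne), if_pos rfl] at ha
  have hprop := min_props_of_sub_ne (by simpa using ha)
  rw [psiFun_c] at hb
  exact hb (tA_eq_zero_left (h2 _) (h2 _) (z_excl hG g).1.symm
    (by rw [hprop.1]; exact hprop.2))

lemma psi_pole_b (hG : G.Adj u v)
    (g : (indepComplex (graphSum G (⊤ : SimpleGraph Bool))).space)
    (hb : psiFun u v g.1 (.inr 1) ≠ 0) :
    g.1 (.inr true) = 0 := by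
  rw [psiFun_b] at hb
  rcases (z_excl hG g).2 with h5 | h5
  · exact absurd h5 hb
  · exact h5

lemma psi_no_ab (hG : G.Adj u v)
    (g : (indepComplex (graphSum G (⊤ : SimpleGraph Bool))).space)
    (ha : psiFun u v g.1 (.inr 0) ≠ 0) (hb : psiFun u v g.1 (.inr 1) ≠ 0) : False := by
  have h2 : ∀ w, (0:ℝ) ≤ g.1 w := space_nonneg g
  have ht := psi_pole_b hG g hb
  rw [psiFun_a] at ha
  exact (tA_ne_zero_pos (h2 _) (h2 _) (h2 _) ha) ht

lemma psi_no_bc (hG : G.Adj u v)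
    (g : (indepComplex (graphSum G (⊤ : SimpleGraph Bool))).space)
    (ha : psiFun u v g.1 (.inr 1) ≠ 0) (hb : psiFun u v g.1 (.inr 2) ≠ 0) : False := by
  have h2 : ∀ w, (0:ℝ) ≤ g.1 w := space_nonneg g
  have ht := psi_pole_b hG g ha
  rw [psiFun_c] at hb
  exact (tA_ne_zero_pos (h2 _) (h2 _) (h2 _) hb) ht

lemma psi_face (hG : G.Adj u v)
    (g : (indepComplex (graphSum G (⊤ : SimpleGraph Bool))).space) :
    fsupp (psiFun u v g.1) ∈ (indepComplex (subdivide4 G u v)).faces := by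
  rw [indep_faces_iff]
  intro a ha b hb hadj
  rw [mem_fsupp] at ha hb
  rcases a with x | i <;> rcases b with y | j
  · rw [sub4_adj_ll] at hadj
    have hgx : g.1 (.inl x) ≠ 0 := fun h0 => ha (psi_inl_eq_zero g h0)
    have hgy : g.1 (.inl y) ≠ 0 := fun h0 => hb (psi_inl_eq_zero g h0)
    exact space_indep g hgx hgy hadj.1
  · rw [sub4_adj_li] at hadj
    rcases hadj with ⟨hxu, hj⟩ | ⟨hxv, hj⟩
    · rw [hxu] at ha; rw [hj] at hb
      exact psi_no_ua hG g ha hb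
    · rw [hxv] at ha; rw [hj] at hb
      exact psi_no_vc hG g ha hb
  · replace hadj := hadj.symm
    rw [sub4_adj_li] at hadj
    rcases hadj with ⟨hxu, hj⟩ | ⟨hxv, hj⟩
    · rw [hxu] at hb; rw [hj] at ha
      exact psi_no_ua hG g hb ha
    · rw [hxv] at hb; rw [hj] at ha
      exact psi_no_vc hG g hb ha
  · rw [sub4_adj_ii] at hadj
    rcases fin3_adj_cases hadj with ⟨hi, hj⟩ | ⟨hi, hj⟩ | ⟨hj, hi⟩ | ⟨hj, hi⟩
    · rw [hi] at ha; rw [hj] at hb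
      exact psi_no_ab hG g ha hb
    · rw [hi] at ha; rw [hj] at hb
      exact psi_no_bc hG g ha hb
    · rw [hi] at ha; rw [hj] at hb
      exact psi_no_ab hG g hb ha
    · rw [hi] at ha; rw [hj] at hb
      exact psi_no_bc hG g hb ha

lemma cont_coord {β : Type*} [Fintype β] {K : AbsSimplicialComplex β} (z : β) :
    Continuous fun p : K.space => p.1 z :=
  (continuous_apply z).comp continuous_subtype_val

lemma cont_tA {Y : Type*} [TopologicalSpace Y] {A B C : Y → ℝ}
    (hA : Continuous A) (hB : Continuous B) (hC : Continuous C) :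
    Continuous fun y => tA (A y) (B y) (C y) := by
  unfold tA
  apply Continuous.add
  · exact hB.min hC
  · apply Continuous.div_const
    apply Continuous.sub
    · apply Continuous.add hC
      exact (hC.sub (continuous_const.mul (hA.min hC))).max continuous_const
    · exact (hC.sub (continuous_const.mul (hB.min hC))).max continuous_const

/-- The homotopy inverse `Ψ`. -/
noncomputable def psiMap (hG : G.Adj u v) :
    C((indepComplex (graphSum G (⊤ : SimpleGraph Bool))).space,
      (indepComplex (subdivide4 G u v)).space) where
  toFun g := mkPt _ (psiFun u v g.1) (psi_nonneg hG g) (psi_face hG g)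
    (by rw [sum_psiFun hG.ne, space_sum])
  continuous_toFun := by
    apply Continuous.subtype_mk
    apply continuous_pi
    intro w
    rcases w with x | i
    · simp only [psiFun_inl]
      exact (((cont_coord _).sub
          (cont_ite _ _ ((cont_coord _).min (cont_coord _)))).sub
        (cont_ite _ _ ((cont_coord _).min (cont_coord _))))
    · simp only [psiFun_inr]
      by_cases hi0 : i = 0
      · simp only [if_pos hi0]
        exact cont_tA (cont_coord _) (cont_coord _) (cont_coord _)
      · by_cases hi1 : i = 1
        · simp only [if_neg hi0, if_pos hi1]
          exact cont_coord _
        · simp only [if_neg hi0, if_neg hi1]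
          exact cont_tA (cont_coord _) (cont_coord _) (cont_coord _)

end PsiMem

section RMem
variable {V : Type} [Fintype V] [DecidableEq V] {G : SimpleGraph V} {u v : V}

lemma add_ne_zero_cases {A B : ℝ} (h : A + B ≠ 0) : A ≠ 0 ∨ B ≠ 0 := by
  by_contra hc
  push_neg at hc
  rw [hc.1, hc.2] at h
  simp at h

lemma r_inl_eq_zero (p : (indepComplex (subdivide4 G u v)).space) {x : V}
    (h0 : p.1 (.inl x) = 0) : rFun u v p.1 (.inl x) = 0 := by
  have h2 : ∀ w, (0:ℝ) ≤ p.1 w := space_nonneg p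
  have ht : (0:ℝ) ≤ p.1 (.inr 0) + p.1 (.inr 2) := by
    have := h2 (Sum.inr 0); have := h2 (Sum.inr 2); linarith
  have hA : (if x = u then min (p.1 (.inl u)) (p.1 (.inr 0) + p.1 (.inr 2)) else 0) = 0 := by
    by_cases hxu : x = u
    · rw [hxu] at h0
      rw [if_pos hxu, h0, min_eq_left ht]
    · rw [if_neg hxu]
  have hB : (if x = v then min (p.1 (.inl v)) (p.1 (.inr 0) + p.1 (.inr 2)) else 0) = 0 := by
    by_cases hxv : x = v
    · rw [hxv] at h0
      rw [if_pos hxv, h0, min_eq_left ht]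
    · rw [if_neg hxv]
  rw [rFun_inl, hA, hB, h0]
  ring

/-- The support facts for a point of the subdivision complex. -/
lemma x_facts (p : (indepComplex (subdivide4 G u v)).space) :
    (p.1 (.inl u) ≠ 0 → p.1 (.inr 0) = 0) ∧
      (p.1 (.inl v) ≠ 0 → p.1 (.inr 2) = 0) ∧
      (p.1 (.inr 1) ≠ 0 → p.1 (.inr 0) = 0 ∧ p.1 (.inr 2) = 0) := by
  refine ⟨?_, ?_, ?_⟩
  · intro h1
    rcases space_pair p (adj_ua G u v) with h5 | h5
    · exact absurd h5 h1
    · exact h5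
  · intro h1
    rcases space_pair p (adj_vc G u v) with h5 | h5
    · exact absurd h5 h1
    · exact h5
  · intro h1
    constructor
    · rcases space_pair p (adj_ab G u v) with h5 | h5
      · exact h5
      · exact absurd h5 h1
    · rcases space_pair p (adj_bc G u v) with h5 | h5
      · exact absurd h5 h1
      · exact h5

lemma min_tau_ne (p : (indepComplex (subdivide4 G u v)).space) {z : V ⊕ Fin 3}
    (hm : min (p.1 z) (p.1 (.inr 0) + p.1 (.inr 2)) ≠ 0) :
    p.1 z ≠ 0 ∧ (p.1 (.inr 0) ≠ 0 ∨ p.1 (.inr 2) ≠ 0) := by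
  have h2 : ∀ w, (0:ℝ) ≤ p.1 w := space_nonneg p
  have ht : (0:ℝ) ≤ p.1 (.inr 0) + p.1 (.inr 2) := by
    have := h2 (Sum.inr 0); have := h2 (Sum.inr 2); linarith
  have := min_ne_zero (h2 z) ht hm
  exact ⟨this.1, add_ne_zero_cases this.2⟩

lemma r_nonneg (hG : G.Adj u v) (p : (indepComplex (subdivide4 G u v)).space) :
    ∀ w, 0 ≤ rFun u v p.1 w := by
  have hne : u ≠ v := hG.ne
  have h2 : ∀ w, (0:ℝ) ≤ p.1 w := space_nonneg p
  have hm0 : (0:ℝ) ≤ min (p.1 (.inl u)) (p.1 (.inr 0) + p.1 (.inr 2)) :=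
    le_min (h2 _) (by have := h2 (Sum.inr 0); have := h2 (Sum.inr 2); linarith)
  have hm0' : (0:ℝ) ≤ min (p.1 (.inl v)) (p.1 (.inr 0) + p.1 (.inr 2)) :=
    le_min (h2 _) (by have := h2 (Sum.inr 0); have := h2 (Sum.inr 2); linarith)
  rintro (x | i)
  · rw [rFun_inl]
    by_cases hxu : x = u
    · have hxv : ¬ x = v := fun hc => hne (hxu ▸ hc ▸ rfl)
      rw [if_pos hxu, if_neg hxv, hxu]
      have := min_le_left (p.1 (.inl u)) (p.1 (.inr 0) + p.1 (.inr 2))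
      linarith
    · by_cases hxv : x = v
      · rw [if_neg hxu, if_pos hxv, hxv]
        have := min_le_left (p.1 (.inl v)) (p.1 (.inr 0) + p.1 (.inr 2))
        linarith
      · rw [if_neg hxu, if_neg hxv]
        have := h2 (Sum.inl x)
        linarith
  · rw [rFun_inr]
    by_cases hi0 : i = 0
    · rw [if_pos hi0]
      have := h2 (Sum.inr 0)
      linarith
    · by_cases hi1 : i = 1
      · rw [if_neg hi0, if_pos hi1]
        exact h2 _
      · rw [if_neg hi0, if_neg hi1]
        have := h2 (Sum.inr 2)
        linarith

/-- the `u`–`a` style contradictions for the union support of `f` and `R f`. -/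
lemma face_id_R (hG : G.Adj u v) (p : (indepComplex (subdivide4 G u v)).space) :
    fsupp p.1 ∪ fsupp (rFun u v p.1) ∈ (indepComplex (subdivide4 G u v)).faces := by
  have h2 : ∀ w, (0:ℝ) ≤ p.1 w := space_nonneg p
  obtain ⟨hua, hvc, hb0⟩ := x_facts p
  rw [indep_faces_iff]
  intro a ha b hb hadj
  rw [Finset.mem_union, mem_fsupp, mem_fsupp] at ha hb
  -- reduce union membership to support facts about `f` alone
  have hV : ∀ x : V, (p.1 (.inl x) ≠ 0 ∨ rFun u v p.1 (.inl x) ≠ 0) →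
      p.1 (.inl x) ≠ 0 := by
    intro x hx
    rcases hx with hx | hx
    · exact hx
    · exact fun h0 => hx (r_inl_eq_zero p h0)
  have hA : (p.1 (.inr 0) ≠ 0 ∨ rFun u v p.1 (.inr 0) ≠ 0) →
      p.1 (.inr 0) ≠ 0 ∨ (p.1 (.inl v) ≠ 0 ∧ (p.1 (.inr 0) ≠ 0 ∨ p.1 (.inr 2) ≠ 0)) := by
    intro hx
    rcases hx with hx | hx
    · exact Or.inl hx
    · rw [rFun_a] at hx
      rcases add_ne_zero_cases hx with hy | hy
      · exact Or.inl hy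
      · exact Or.inr (min_tau_ne p hy)
  have hC : (p.1 (.inr 2) ≠ 0 ∨ rFun u v p.1 (.inr 2) ≠ 0) →
      p.1 (.inr 2) ≠ 0 ∨ (p.1 (.inl u) ≠ 0 ∧ (p.1 (.inr 0) ≠ 0 ∨ p.1 (.inr 2) ≠ 0)) := by
    intro hx
    rcases hx with hx | hx
    · exact Or.inl hx
    · rw [rFun_c] at hx
      rcases add_ne_zero_cases hx with hy | hy
      · exact Or.inl hy
      · exact Or.inr (min_tau_ne p hy)
  have hB : (p.1 (.inr 1) ≠ 0 ∨ rFun u v p.1 (.inr 1) ≠ 0) → p.1 (.inr 1) ≠ 0 := by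
    intro hx
    rcases hx with hx | hx
    · exact hx
    · rw [rFun_b] at hx; exact hx
  -- main contradictions
  have main_ua : p.1 (.inl u) ≠ 0 →
      (p.1 (.inr 0) ≠ 0 ∨ (p.1 (.inl v) ≠ 0 ∧ (p.1 (.inr 0) ≠ 0 ∨ p.1 (.inr 2) ≠ 0))) →
      False := by
    intro hu ha
    rcases ha with ha | ⟨hv, hac⟩
    · exact ha (hua hu)
    · rcases hac with ha | hc
      · exact ha (hua hu)
      · exact hc (hvc hv)
  have main_vc : p.1 (.inl v) ≠ 0 →
      (p.1 (.inr 2) ≠ 0 ∨ (p.1 (.inl u) ≠ 0 ∧ (p.1 (.inr 0) ≠ 0 ∨ p.1 (.inr 2) ≠ 0))) →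
      False := by
    intro hv hcs
    rcases hcs with hc | ⟨hu, hac⟩
    · exact hc (hvc hv)
    · rcases hac with ha | hc
      · exact ha (hua hu)
      · exact hc (hvc hv)
  have main_ab : p.1 (.inr 1) ≠ 0 →
      (p.1 (.inr 0) ≠ 0 ∨ (p.1 (.inl v) ≠ 0 ∧ (p.1 (.inr 0) ≠ 0 ∨ p.1 (.inr 2) ≠ 0))) →
      False := by
    intro hbb has
    have hb00 := hb0 hbb
    rcases has with ha | ⟨hv, hac⟩
    · exact ha hb00.1
    · rcases hac with ha | hc
      · exact ha hb00.1
      · exact hc hb00.2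
  have main_bc : p.1 (.inr 1) ≠ 0 →
      (p.1 (.inr 2) ≠ 0 ∨ (p.1 (.inl u) ≠ 0 ∧ (p.1 (.inr 0) ≠ 0 ∨ p.1 (.inr 2) ≠ 0))) →
      False := by
    intro hbb hcs
    have hb00 := hb0 hbb
    rcases hcs with hc | ⟨hu, hac⟩
    · exact hc hb00.2
    · rcases hac with ha | hc
      · exact ha hb00.1
      · exact hc hb00.2
  rcases a with x | i <;> rcases b with y | j
  · exact space_indep p (hV x ha) (hV y hb) hadj
  · rw [sub4_adj_li] at hadj
    rcases hadj with ⟨hxu, hj⟩ | ⟨hxv, hj⟩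
    · rw [hxu] at ha; rw [hj] at hb
      exact main_ua (hV u ha) (hA hb)
    · rw [hxv] at ha; rw [hj] at hb
      exact main_vc (hV v ha) (hC hb)
  · replace hadj := hadj.symm
    rw [sub4_adj_li] at hadj
    rcases hadj with ⟨hxu, hj⟩ | ⟨hxv, hj⟩
    · rw [hxu] at hb; rw [hj] at ha
      exact main_ua (hV u hb) (hA ha)
    · rw [hxv] at hb; rw [hj] at ha
      exact main_vc (hV v hb) (hC ha)
  · rw [sub4_adj_ii] at hadj
    rcases fin3_adj_cases hadj with ⟨hi, hj⟩ | ⟨hi, hj⟩ | ⟨hj, hi⟩ | ⟨hj, hi⟩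
    · rw [hi] at ha; rw [hj] at hb
      exact main_ab (hB hb) (hA ha)
    · rw [hi] at ha; rw [hj] at hb
      exact main_bc (hB ha) (hC hb)
    · rw [hi] at ha; rw [hj] at hb
      exact main_ab (hB ha) (hA hb)
    · rw [hi] at ha; rw [hj] at hb
      exact main_bc (hB hb) (hC ha)

/-- The intermediate retraction `R` as a continuous self-map. -/
noncomputable def rMap (hG : G.Adj u v) :
    C((indepComplex (subdivide4 G u v)).space, (indepComplex (subdivide4 G u v)).space) where
  toFun p := mkPt _ (rFun u v p.1) (r_nonneg hG p)
    ((indepComplex (subdivide4 G u v)).down_closed (face_id_R hG p)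
      Finset.subset_union_right)
    (by rw [sum_rFun hG.ne, space_sum])
  continuous_toFun := by
    apply Continuous.subtype_mk
    apply continuous_pi
    intro w
    rcases w with x | i
    · simp only [rFun_inl]
      exact (((cont_coord _).sub
          (cont_ite _ _ ((cont_coord _).min ((cont_coord _).add (cont_coord _))))).sub
        (cont_ite _ _ ((cont_coord _).min ((cont_coord _).add (cont_coord _)))))
    · simp only [rFun_inr]
      by_cases hi0 : i = 0
      · simp only [if_pos hi0]
        exact (cont_coord _).add ((cont_coord _).min ((cont_coord _).add (cont_coord _)))
      · by_cases hi1 : i = 1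
        · simp only [if_neg hi0, if_pos hi1]
          exact cont_coord _
        · simp only [if_neg hi0, if_neg hi1]
          exact (cont_coord _).add ((cont_coord _).min ((cont_coord _).add (cont_coord _)))

end RMem

section Faces2
variable {V : Type} [Fintype V] [DecidableEq V] {G : SimpleGraph V} {u v : V}

/-- Carrier condition for the homotopy from `R` to `Ψ ∘ Φ`. -/
lemma face_R_psiphi (hG : G.Adj u v) (p : (indepComplex (subdivide4 G u v)).space) :
    fsupp (rFun u v p.1) ∪ fsupp (psiFun u v (phiFun u v p.1))
      ∈ (indepComplex (subdivide4 G u v)).faces := by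
  have hne : u ≠ v := hG.ne
  have h2 : ∀ w, (0:ℝ) ≤ p.1 w := space_nonneg p
  obtain ⟨hua, hvc, hb0⟩ := x_facts p
  set q : (indepComplex (graphSum G (⊤ : SimpleGraph Bool))).space := phiMap hG p with hq
  have hq1 : q.1 = phiFun u v p.1 := rfl
  have hq2 : ∀ w, (0:ℝ) ≤ q.1 w := space_nonneg q
  have hτ0 : (0:ℝ) ≤ p.1 (.inr 0) + p.1 (.inr 2) := by
    have := h2 (Sum.inr 0); have := h2 (Sum.inr 2); linarith
  have hgu : q.1 (.inl u) = p.1 (.inl u) - min (p.1 (.inl u)) (p.1 (.inl v)) := by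
    rw [hq1, phiFun_inl, if_pos rfl, if_neg hne]; ring
  have hgv : q.1 (.inl v) = p.1 (.inl v) - min (p.1 (.inl u)) (p.1 (.inl v)) := by
    rw [hq1, phiFun_inl, if_neg (Ne.symm hne), if_pos rfl]; ring
  have hgt : q.1 (.inr true) = p.1 (.inr 0) + p.1 (.inr 2) := rfl
  have hmz : min (p.1 (.inl u)) (p.1 (.inl v)) ≠ 0 →
      p.1 (.inr 0) = 0 ∧ p.1 (.inr 2) = 0 := by
    intro hm
    have := min_ne_zero (h2 _) (h2 _) hm
    exact ⟨hua this.1, hvc this.2⟩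
  -- both sides of `a` vanish when `fa = fc = 0`
  have a_zero : p.1 (.inr 0) = 0 → p.1 (.inr 2) = 0 →
      rFun u v p.1 (.inr 0) = 0 ∧ psiFun u v q.1 (.inr 0) = 0 := by
    intro hfa hfc
    constructor
    · rw [rFun_a, hfa, hfc]
      rw [show (0:ℝ) + 0 = 0 by ring, min_eq_right (h2 _)]
      ring
    · rw [psiFun_a]
      rw [show q.1 (.inr true) = (0:ℝ) by rw [hgt, hfa, hfc]; ring]
      exact tA_zero (hq2 _) (hq2 _)
  have c_zero : p.1 (.inr 0) = 0 → p.1 (.inr 2) = 0 →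
      rFun u v p.1 (.inr 2) = 0 ∧ psiFun u v q.1 (.inr 2) = 0 := by
    intro hfa hfc
    constructor
    · rw [rFun_c, hfa, hfc]
      rw [show (0:ℝ) + 0 = 0 by ring, min_eq_right (h2 _)]
      ring
    · rw [psiFun_c]
      rw [show q.1 (.inr true) = (0:ℝ) by rw [hgt, hfa, hfc]; ring]
      exact tA_zero (hq2 _) (hq2 _)
  rw [indep_faces_iff]
  intro a hb'' b' hb hadj
  -- rename to match earlier style
  rw [Finset.mem_union, mem_fsupp, mem_fsupp] at hb'' hb
  have hV : ∀ x : V, (rFun u v p.1 (.inl x) ≠ 0 ∨ psiFun u v q.1 (.inl x) ≠ 0) →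
      p.1 (.inl x) ≠ 0 := by
    intro x hx
    rcases hx with hx | hx
    · exact fun h0 => hx (r_inl_eq_zero p h0)
    · have : q.1 (.inl x) ≠ 0 := fun h0 => hx (psi_inl_eq_zero q h0)
      rw [hq1] at this
      exact phi_inl_ne p this
  -- the u–a contradiction
  have main_ua : (rFun u v p.1 (.inl u) ≠ 0 ∨ psiFun u v q.1 (.inl u) ≠ 0) →
      (rFun u v p.1 (.inr 0) ≠ 0 ∨ psiFun u v q.1 (.inr 0) ≠ 0) → False := by
    intro huside haside
    by_cases hm : min (p.1 (.inl u)) (p.1 (.inl v)) = 0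
    · -- here q-coordinates on u, v agree with those of p
      have hqu : q.1 (.inl u) = p.1 (.inl u) := by rw [hgu, hm]; ring
      have hqv : q.1 (.inl v) = p.1 (.inl v) := by rw [hgv, hm]; ring
      have hlt : min (p.1 (.inl u)) (p.1 (.inr 0) + p.1 (.inr 2)) =
          (p.1 (.inr 0) + p.1 (.inr 2)) ∧
          (p.1 (.inr 0) + p.1 (.inr 2)) < p.1 (.inl u) := by
        rcases huside with hx | hx
        · rw [rFun_inl, if_pos rfl, if_neg hne] at hx
          exact min_props_of_sub_ne (by simpa using hx)
        · rw [psiFun_inl, if_pos rfl, if_neg hne] at hx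
          have := min_props_of_sub_ne (a := q.1 (.inl u)) (b := q.1 (.inr true))
            (by simpa using hx)
          rw [hqu, hgt] at this
          exact this
      have hfu : p.1 (.inl u) ≠ 0 := by
        intro h0
        rw [h0] at hlt
        linarith [hlt.2, hτ0]
      rcases haside with hx | hx
      · rw [rFun_a] at hx
        rcases add_ne_zero_cases hx with hy | hy
        · exact hy (hua hfu)
        · obtain ⟨hfv, hac⟩ := min_tau_ne p hy
          rcases hac with hy' | hy'
          · exact hy' (hua hfu)
          · exact hy' (hvc hfv)
      · rw [psiFun_a, hqu, hqv, hgt] at hx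
        by_cases hτ : p.1 (.inr 0) + p.1 (.inr 2) = 0
        · rw [hτ] at hx
          exact hx (tA_zero (h2 _) (h2 _))
        · rcases add_ne_zero_cases hτ with hy | hy
          · exact hy (hua hfu)
          · have hfv : p.1 (.inl v) = 0 := by
              by_contra hfv
              exact hy (hvc hfv)
            exact hx (tA_eq_zero_left (h2 _) hτ0 (Or.inr hfv)
              (by rw [hlt.1]; exact hlt.2))
    · obtain ⟨hfa, hfc⟩ := hmz hm
      rcases haside with hx | hx
      · exact hx (a_zero hfa hfc).1
      · exact hx (a_zero hfa hfc).2
  -- the v–c contradiction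
  have main_vc : (rFun u v p.1 (.inl v) ≠ 0 ∨ psiFun u v q.1 (.inl v) ≠ 0) →
      (rFun u v p.1 (.inr 2) ≠ 0 ∨ psiFun u v q.1 (.inr 2) ≠ 0) → False := by
    intro hvside hcside
    by_cases hm : min (p.1 (.inl u)) (p.1 (.inl v)) = 0
    · have hqu : q.1 (.inl u) = p.1 (.inl u) := by rw [hgu, hm]; ring
      have hqv : q.1 (.inl v) = p.1 (.inl v) := by rw [hgv, hm]; ring
      have hlt : min (p.1 (.inl v)) (p.1 (.inr 0) + p.1 (.inr 2)) =
          (p.1 (.inr 0) + p.1 (.inr 2)) ∧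
          (p.1 (.inr 0) + p.1 (.inr 2)) < p.1 (.inl v) := by
        rcases hvside with hx | hx
        · rw [rFun_inl, if_neg (Ne.symm hne), if_pos rfl] at hx
          exact min_props_of_sub_ne (by simpa using hx)
        · rw [psiFun_inl, if_neg (Ne.symm hne), if_pos rfl] at hx
          have := min_props_of_sub_ne (a := q.1 (.inl v)) (b := q.1 (.inr true))
            (by simpa using hx)
          rw [hqv, hgt] at this
          exact this
      have hfv : p.1 (.inl v) ≠ 0 := by
        intro h0
        rw [h0] at hlt
        linarith [hlt.2, hτ0]
      rcases hcside with hx | hx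
      · rw [rFun_c] at hx
        rcases add_ne_zero_cases hx with hy | hy
        · exact hy (hvc hfv)
        · obtain ⟨hfu, hac⟩ := min_tau_ne p hy
          rcases hac with hy' | hy'
          · exact hy' (hua hfu)
          · exact hy' (hvc hfv)
      · rw [psiFun_c, hqu, hqv, hgt] at hx
        by_cases hτ : p.1 (.inr 0) + p.1 (.inr 2) = 0
        · rw [hτ] at hx
          exact hx (tA_zero (h2 _) (h2 _))
        · rcases add_ne_zero_cases hτ with hy | hy
          · have hfu : p.1 (.inl u) = 0 := by
              by_contra hfu
              exact hy (hua hfu)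
            exact hx (tA_eq_zero_left (h2 _) hτ0 (Or.inr hfu)
              (by rw [hlt.1]; exact hlt.2))
          · exact hy (hvc hfv)
    · obtain ⟨hfa, hfc⟩ := hmz hm
      rcases hcside with hx | hx
      · exact hx (c_zero hfa hfc).1
      · exact hx (c_zero hfa hfc).2
  -- the b-side gives `fa = fc = 0`
  have b_facts : (rFun u v p.1 (.inr 1) ≠ 0 ∨ psiFun u v q.1 (.inr 1) ≠ 0) →
      p.1 (.inr 0) = 0 ∧ p.1 (.inr 2) = 0 := by
    intro hbside
    have hx : p.1 (.inr 1) ≠ 0 ∨ min (p.1 (.inl u)) (p.1 (.inl v)) ≠ 0 := by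
      rcases hbside with hx | hx
      · rw [rFun_b] at hx
        exact Or.inl hx
      · rw [psiFun_b] at hx
        have : q.1 (.inr false) = p.1 (.inr 1)
            + 2 * min (p.1 (.inl u)) (p.1 (.inl v)) := rfl
        rw [this] at hx
        rcases add_ne_zero_cases hx with hy | hy
        · exact Or.inl hy
        · right
          intro h0
          rw [h0] at hy
          simp at hy
    rcases hx with hx | hx
    · exact hb0 hx
    · exact hmz hx
  have main_ab : (rFun u v p.1 (.inr 0) ≠ 0 ∨ psiFun u v q.1 (.inr 0) ≠ 0) →
      (rFun u v p.1 (.inr 1) ≠ 0 ∨ psiFun u v q.1 (.inr 1) ≠ 0) → False := by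
    intro haside hbside
    obtain ⟨hfa, hfc⟩ := b_facts hbside
    rcases haside with hx | hx
    · exact hx (a_zero hfa hfc).1
    · exact hx (a_zero hfa hfc).2
  have main_bc : (rFun u v p.1 (.inr 1) ≠ 0 ∨ psiFun u v q.1 (.inr 1) ≠ 0) →
      (rFun u v p.1 (.inr 2) ≠ 0 ∨ psiFun u v q.1 (.inr 2) ≠ 0) → False := by
    intro hbside hcside
    obtain ⟨hfa, hfc⟩ := b_facts hbside
    rcases hcside with hx | hx
    · exact hx (c_zero hfa hfc).1
    · exact hx (c_zero hfa hfc).2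
  rcases a with x | i <;> rcases b' with y | j
  · exact space_indep p (hV x hb'') (hV y hb) hadj
  · rw [sub4_adj_li] at hadj
    rcases hadj with ⟨hxu, hj⟩ | ⟨hxv, hj⟩
    · rw [hxu] at hb''; rw [hj] at hb
      exact main_ua hb'' hb
    · rw [hxv] at hb''; rw [hj] at hb
      exact main_vc hb'' hb
  · replace hadj := hadj.symm
    rw [sub4_adj_li] at hadj
    rcases hadj with ⟨hxu, hj⟩ | ⟨hxv, hj⟩
    · rw [hxu] at hb; rw [hj] at hb''
      exact main_ua hb hb''
    · rw [hxv] at hb; rw [hj] at hb''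
      exact main_vc hb hb''
  · rw [sub4_adj_ii] at hadj
    rcases fin3_adj_cases hadj with ⟨hi, hj⟩ | ⟨hi, hj⟩ | ⟨hj, hi⟩ | ⟨hj, hi⟩
    · rw [hi] at hb''; rw [hj] at hb
      exact main_ab hb'' hb
    · rw [hi] at hb''; rw [hj] at hb
      exact main_bc hb'' hb
    · rw [hi] at hb''; rw [hj] at hb
      exact main_ab hb hb''
    · rw [hi] at hb''; rw [hj] at hb
      exact main_bc hb hb''

/-- Carrier condition for the homotopy from `Φ ∘ Ψ` to the identity. -/
lemma face_phipsi_id (hG : G.Adj u v)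
    (z : (indepComplex (graphSum G (⊤ : SimpleGraph Bool))).space) :
    fsupp (phiFun u v (psiFun u v z.1)) ∪ fsupp z.1
      ∈ (indepComplex (graphSum G (⊤ : SimpleGraph Bool))).faces := by
  have hne : u ≠ v := hG.ne
  have h2 : ∀ w, (0:ℝ) ≤ z.1 w := space_nonneg z
  set r : (indepComplex (subdivide4 G u v)).space := psiMap hG z with hr
  have hr1 : r.1 = psiFun u v z.1 := rfl
  have hr2 : ∀ w, (0:ℝ) ≤ r.1 w := space_nonneg r
  obtain ⟨hduv, hdpoles⟩ := z_excl hG z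
  -- the min of the two modified equator weights vanishes
  have hm' : min (r.1 (.inl u)) (r.1 (.inl v)) = 0 := by
    rcases hduv with h0 | h0
    · have : r.1 (.inl u) = 0 := by
        rw [hr1, psiFun_inl, if_pos rfl, if_neg hne, h0,
          min_eq_left (h2 (Sum.inr true))]
        ring
      rw [this, min_eq_left (hr2 _)]
    · have : r.1 (.inl v) = 0 := by
        rw [hr1, psiFun_inl, if_neg (Ne.symm hne), if_pos rfl, h0,
          min_eq_left (h2 (Sum.inr true))]
        ring
      rw [this, min_eq_right (hr2 _)]
  rw [indep_faces_iff]
  intro a ha b' hb hadj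
  rw [Finset.mem_union, mem_fsupp, mem_fsupp] at ha hb
  have hV : ∀ x : V, (phiFun u v (psiFun u v z.1) (.inl x) ≠ 0 ∨ z.1 (.inl x) ≠ 0) →
      z.1 (.inl x) ≠ 0 := by
    intro x hx
    rcases hx with hx | hx
    · have h3 : psiFun u v z.1 (.inl x) ≠ 0 := by
        rw [← hr1] at hx ⊢
        exact phi_inl_ne r hx
      exact fun h0 => h3 (psi_inl_eq_zero z h0)
    · exact hx
  have hFalse : (phiFun u v (psiFun u v z.1) (.inr false) ≠ 0 ∨ z.1 (.inr false) ≠ 0) →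
      z.1 (.inr false) ≠ 0 := by
    intro hx
    rcases hx with hx | hx
    · have : phiFun u v (psiFun u v z.1) (.inr false) = z.1 (.inr false) := by
        rw [phiFun_false, psiFun_b, ← hr1, hm']
        ring
      rw [this] at hx
      exact hx
    · exact hx
  have hTrue : (phiFun u v (psiFun u v z.1) (.inr true) ≠ 0 ∨ z.1 (.inr true) ≠ 0) →
      z.1 (.inr true) ≠ 0 := by
    intro hx
    rcases hx with hx | hx
    · intro h0
      apply hx
      rw [phiFun_true, psiFun_a, psiFun_c, h0, tA_zero (h2 _) (h2 _),
        tA_zero (h2 _) (h2 _)]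
      ring
    · exact hx
  rcases a with x | s <;> rcases b' with y | t
  · exact space_indep z (hV x ha) (hV y hb) hadj
  · exact gsum_not_adj_lr G hadj
  · exact gsum_not_adj_rl G hadj
  · have hst : s ≠ t := hadj
    cases s <;> cases t
    · exact hst rfl
    · rcases hdpoles with h5 | h5
      · exact hFalse ha h5
      · exact hTrue hb h5
    · rcases hdpoles with h5 | h5
      · exact hFalse hb h5
      · exact hTrue ha h5
    · exact hst rfl

end Faces2

section Assembly
variable {V : Type} [Fintype V] [DecidableEq V] {G : SimpleGraph V} {u v : V}

/-- The homotopy equivalence between the subdivision complex and the suspension model. -/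
noncomputable def mainHE (hG : G.Adj u v) :
    ContinuousMap.HomotopyEquiv (indepComplex (subdivide4 G u v)).space
      (indepComplex (graphSum G (⊤ : SimpleGraph Bool))).space where
  toFun := phiMap hG
  invFun := psiMap hG
  left_inv := by
    refine ⟨(ContinuousMap.Homotopy.trans
      (lineHomotopy (ContinuousMap.id _) (rMap hG) ?_)
      (lineHomotopy (rMap hG) ((psiMap hG).comp (phiMap hG)) ?_)).symm⟩
    · intro p
      exact face_id_R hG p
    · intro p
      exact face_R_psiphi hG p
  right_inv := by
    refine ⟨lineHomotopy ((phiMap hG).comp (psiMap hG)) (ContinuousMap.id _) ?_⟩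
    intro z
    exact face_phipsi_id hG z

end Assembly

section Join
variable {V : Type} [Fintype V] [DecidableEq V] (G : SimpleGraph V)

lemma zsp_poles_excl (z : (indepComplex (graphSum G (⊤ : SimpleGraph Bool))).space) :
    z.1 (.inr false) = 0 ∨ z.1 (.inr true) = 0 :=
  space_pair z (gsum_adj_poles G)

lemma zsp_sum_V (z : (indepComplex (graphSum G (⊤ : SimpleGraph Bool))).space) :
    ∑ x : V, z.1 (.inl x) = 1 - (z.1 (.inr false) + z.1 (.inr true)) := by
  have := space_sum z
  rw [Fintype.sum_sum_type] at this
  have hb : ∑ b : Bool, z.1 (.inr b) = z.1 (.inr true) + z.1 (.inr false) := by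
    simp [Fintype.univ_bool]
  rw [hb] at this
  linarith

lemma zsp_poles_le_one (z : (indepComplex (graphSum G (⊤ : SimpleGraph Bool))).space) :
    z.1 (.inr false) + z.1 (.inr true) ≤ 1 := by
  have h1 := zsp_sum_V G z
  have h2 : (0:ℝ) ≤ ∑ x : V, z.1 (.inl x) :=
    Finset.sum_nonneg fun x _ => space_nonneg z _
  linarith

/-- A point of the suspension model built from a point of `I_G`, a pole and a height. -/
noncomputable def joinPt (y : (indepComplex G).space) (ε : Bool) (t : I) :
    (indepComplex (graphSum G (⊤ : SimpleGraph Bool))).space :=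
  mkPt _ (fun w => match w with
    | .inl x => (1 - (t:ℝ)) * y.1 x
    | .inr b => (if b = ε then (1:ℝ) else 0) * (t:ℝ))
    (by
      rintro (x | b)
      · show (0:ℝ) ≤ (1 - (t:ℝ)) * y.1 x
        exact mul_nonneg (by linarith [t.2.2]) (space_nonneg y x)
      · show (0:ℝ) ≤ (if b = ε then (1:ℝ) else 0) * (t:ℝ)
        by_cases hb : b = ε
        · rw [if_pos hb, one_mul]; exact t.2.1
        · rw [if_neg hb, zero_mul])
    (by
      rw [indep_faces_iff]
      intro a ha b hb hadj
      rw [mem_fsupp] at ha hb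
      rcases a with x | s <;> rcases b with x' | s'
      · have hx : y.1 x ≠ 0 := by
          intro h0
          apply ha
          show (1 - (t:ℝ)) * y.1 x = 0
          rw [h0]; ring
        have hx' : y.1 x' ≠ 0 := by
          intro h0
          apply hb
          show (1 - (t:ℝ)) * y.1 x' = 0
          rw [h0]; ring
        exact space_indep y hx hx' hadj
      · exact gsum_not_adj_lr G hadj
      · exact gsum_not_adj_rl G hadj
      · have hs : s = ε := by
          by_contra hc
          apply ha
          show (if s = ε then (1:ℝ) else 0) * (t:ℝ) = 0
          rw [if_neg hc]; ring
        have hs' : s' = ε := by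
          by_contra hc
          apply hb
          show (if s' = ε then (1:ℝ) else 0) * (t:ℝ) = 0
          rw [if_neg hc]; ring
        have : s ≠ s' := hadj
        exact this (hs.trans hs'.symm))
    (by
      rw [Fintype.sum_sum_type]
      have h1 : ∑ x : V, (1 - (t:ℝ)) * y.1 x = 1 - (t:ℝ) := by
        rw [← Finset.mul_sum, space_sum]; ring
      have h2 : ∑ b : Bool, (if b = ε then (1:ℝ) else 0) * (t:ℝ) = (t:ℝ) := by
        cases ε <;> simp [Fintype.univ_bool]
      show (∑ x : V, (1 - (t:ℝ)) * y.1 x) +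
        (∑ b : Bool, (if b = ε then (1:ℝ) else 0) * (t:ℝ)) = 1
      rw [h1, h2]; ring)

@[simp] lemma joinPt_inl (y : (indepComplex G).space) (ε : Bool) (t : I) (x : V) :
    (joinPt G y ε t).1 (.inl x) = (1 - (t:ℝ)) * y.1 x := rfl

@[simp] lemma joinPt_inr (y : (indepComplex G).space) (ε : Bool) (t : I) (b : Bool) :
    (joinPt G y ε t).1 (.inr b) = (if b = ε then (1:ℝ) else 0) * (t:ℝ) := rfl

end Join

section Join2
variable {V : Type} [Fintype V] [DecidableEq V] (G : SimpleGraph V)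

/-- The pole points of the suspension model. -/
noncomputable def polePt (ε : Bool) :
    (indepComplex (graphSum G (⊤ : SimpleGraph Bool))).space :=
  mkPt _ (fun w => match w with
    | .inl _ => (0:ℝ)
    | .inr b => if b = ε then (1:ℝ) else 0)
    (by
      rintro (x | b)
      · exact le_refl 0
      · show (0:ℝ) ≤ if b = ε then (1:ℝ) else 0
        by_cases hb : b = ε
        · rw [if_pos hb]; exact zero_le_one
        · rw [if_neg hb])
    (by
      rw [indep_faces_iff]
      intro a ha b hb hadj
      rw [mem_fsupp] at ha hb
      rcases a with x | s <;> rcases b with x' | s'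
      · exact ha rfl
      · exact ha rfl
      · exact hb rfl
      · have hs : s = ε := by
          by_contra hc
          apply ha
          show (if s = ε then (1:ℝ) else 0) = 0
          rw [if_neg hc]
        have hs' : s' = ε := by
          by_contra hc
          apply hb
          show (if s' = ε then (1:ℝ) else 0) = 0
          rw [if_neg hc]
        exact (show s ≠ s' from hadj) (hs.trans hs'.symm))
    (by
      rw [Fintype.sum_sum_type]
      have h2 : ∑ b : Bool, (if b = ε then (1:ℝ) else 0) = 1 := by
        cases ε <;> simp [Fintype.univ_bool]
      show (∑ _x : V, (0:ℝ)) + (∑ b : Bool, if b = ε then (1:ℝ) else 0) = 1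
      rw [h2]
      simp)

@[simp] lemma polePt_inl (ε : Bool) (x : V) : (polePt G ε).1 (.inl x) = 0 := rfl

@[simp] lemma polePt_inr (ε b : Bool) :
    (polePt G ε).1 (.inr b) = if b = ε then (1:ℝ) else 0 := rfl

/-- The map from the data of the topological join to the suspension model. -/
noncomputable def joinPre :
    ((indepComplex G).space × Bool × I) ⊕ ((indepComplex G).space ⊕ Bool) →
      (indepComplex (graphSum G (⊤ : SimpleGraph Bool))).space :=
  Sum.elim (fun p => joinPt G p.1 p.2.1 p.2.2)
    (Sum.elim (fun y => joinPt G y false 0) (fun ε => polePt G ε))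

lemma joinPre_rel : ∀ a b, JoinRel (indepComplex G).space Bool a b →
    joinPre G a = joinPre G b := by
  rintro _ _ (⟨y, ε⟩ | ⟨y, ε⟩)
  · apply Subtype.ext
    funext w
    show (joinPt G y ε 0).1 w = (joinPt G y false 0).1 w
    rcases w with x | b
    · rfl
    · rw [joinPt_inr, joinPt_inr]
      norm_num
  · apply Subtype.ext
    funext w
    show (joinPt G y ε 1).1 w = (polePt G ε).1 w
    rcases w with x | b
    · rw [joinPt_inl, polePt_inl]
      norm_num
    · rw [joinPt_inr, polePt_inr]
      norm_num

lemma joinPre_continuous : Continuous (joinPre G) := by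
  apply Continuous.sumElim
  · apply Continuous.subtype_mk
    apply continuous_pi
    intro w
    have hty : Continuous fun p : (indepComplex G).space × Bool × I => ((p.2.2 : ℝ)) :=
      continuous_subtype_val.comp (continuous_snd.comp continuous_snd)
    rcases w with x | b
    · show Continuous fun p : (indepComplex G).space × Bool × I =>
        (1 - (p.2.2 : ℝ)) * p.1.1 x
      exact ((continuous_const.sub hty).mul
        ((continuous_apply x).comp (continuous_subtype_val.comp continuous_fst)))
    · show Continuous fun p : (indepComplex G).space × Bool × I =>
        (if b = p.2.1 then (1:ℝ) else 0) * (p.2.2 : ℝ)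
      have hdis : Continuous fun p : (indepComplex G).space × Bool × I =>
          (if b = p.2.1 then (1:ℝ) else 0) :=
        (continuous_of_discreteTopology (f := fun ε : Bool => if b = ε then (1:ℝ) else 0)).comp
          (continuous_fst.comp continuous_snd)
      exact hdis.mul hty
  · apply Continuous.sumElim
    · apply Continuous.subtype_mk
      apply continuous_pi
      intro w
      rcases w with x | b
      · show Continuous fun y : (indepComplex G).space => (1 - ((0:I) : ℝ)) * y.1 x
        exact continuous_const.mul ((continuous_apply x).comp continuous_subtype_val)
      · exact continuous_const
    · exact continuous_of_discreteTopology

/-- The continuous bijection from the topological join onto the suspension model. -/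
noncomputable def joinToModel :
    TopJoin (indepComplex G).space Bool →
      (indepComplex (graphSum G (⊤ : SimpleGraph Bool))).space :=
  Quot.lift (joinPre G) (joinPre_rel G)

lemma joinToModel_continuous : Continuous (joinToModel G) :=
  continuous_quot_lift _ (joinPre_continuous G)

end Join2

section Join3
variable {V : Type} [Fintype V] [DecidableEq V] (G : SimpleGraph V)

lemma zsp_pole_sum_nonneg (z : (indepComplex (graphSum G (⊤ : SimpleGraph Bool))).space) :
    (0:ℝ) ≤ z.1 (.inr false) + z.1 (.inr true) := by
  have := space_nonneg z (Sum.inr false)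
  have := space_nonneg z (Sum.inr true)
  linarith

/-- normalization of the equator part of a point of the suspension model. -/
noncomputable def ynormPt (z : (indepComplex (graphSum G (⊤ : SimpleGraph Bool))).space)
    (h1 : z.1 (.inr false) + z.1 (.inr true) ≠ 1) : (indepComplex G).space :=
  mkPt _ (fun x => z.1 (.inl x) / (1 - (z.1 (.inr false) + z.1 (.inr true))))
    (fun x => div_nonneg (space_nonneg z _)
      (by
        have := zsp_poles_le_one G z
        have h2 : z.1 (.inr false) + z.1 (.inr true) < 1 :=
          lt_of_le_of_ne this h1
        linarith))
    (by
      rw [indep_faces_iff]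
      intro a ha b hb hadj
      rw [mem_fsupp] at ha hb
      have hza : z.1 (.inl a) ≠ 0 := by
        intro h0
        apply ha
        show z.1 (.inl a) / _ = 0
        rw [h0, zero_div]
      have hzb : z.1 (.inl b) ≠ 0 := by
        intro h0
        apply hb
        show z.1 (.inl b) / _ = 0
        rw [h0, zero_div]
      exact space_indep z hza hzb hadj)
    (by
      have hne : 1 - (z.1 (.inr false) + z.1 (.inr true)) ≠ 0 :=
        sub_ne_zero.mpr (Ne.symm h1)
      rw [← Finset.sum_div, zsp_sum_V, div_self hne])

@[simp] lemma ynormPt_coe (z : (indepComplex (graphSum G (⊤ : SimpleGraph Bool))).space)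
    (h1 : z.1 (.inr false) + z.1 (.inr true) ≠ 1) (x : V) :
    (ynormPt G z h1).1 x = z.1 (.inl x) / (1 - (z.1 (.inr false) + z.1 (.inr true))) := rfl

/-- The inverse of `joinToModel`, as a bare function. -/
noncomputable def joinInv (z : (indepComplex (graphSum G (⊤ : SimpleGraph Bool))).space) :
    TopJoin (indepComplex G).space Bool :=
  if h1 : z.1 (.inr false) + z.1 (.inr true) = 1 then
    (if z.1 (.inr true) = 0 then Quot.mk _ (.inr (.inr false))
      else Quot.mk _ (.inr (.inr true)))
  else
    Quot.mk _ (.inl (ynormPt G z h1, (if z.1 (.inr true) = 0 then false else true),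
      ⟨z.1 (.inr false) + z.1 (.inr true),
        ⟨zsp_pole_sum_nonneg G z, zsp_poles_le_one G z⟩⟩))

lemma join_right_inv (z : (indepComplex (graphSum G (⊤ : SimpleGraph Bool))).space) :
    joinToModel G (joinInv G z) = z := by
  have h2 := space_nonneg z
  by_cases h1 : z.1 (.inr false) + z.1 (.inr true) = 1
  · -- pole case : the equator part of `z` vanishes
    have hV : ∀ x : V, z.1 (.inl x) = 0 := by
      have hsum : ∑ x : V, z.1 (.inl x) = 0 := by
        rw [zsp_sum_V, h1]; ring
      intro x
      have := (Finset.sum_eq_zero_iff_of_nonneg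
        (fun y _ => h2 (Sum.inl y))).mp hsum
      exact this x (Finset.mem_univ x)
    rw [joinInv]; erw [dif_pos h1]
    by_cases ht : z.1 (.inr true) = 0
    · erw [if_pos ht]
      apply Subtype.ext
      funext w
      show (polePt G false).1 w = z.1 w
      rcases w with x | b
      · rw [polePt_inl, hV x]
      · cases b
        · rw [polePt_inr, if_pos rfl]
          rw [ht] at h1
          linarith
        · rw [polePt_inr, if_neg (by simp : ¬ (true = false))]
          rw [ht]
    · erw [if_neg ht]
      have hf : z.1 (.inr false) = 0 := by
        rcases zsp_poles_excl G z with h5 | h5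
        · exact h5
        · exact absurd h5 ht
      apply Subtype.ext
      funext w
      show (polePt G true).1 w = z.1 w
      rcases w with x | b
      · rw [polePt_inl, hV x]
      · cases b
        · rw [polePt_inr, if_neg (by simp : ¬ (false = true))]
          rw [hf]
        · rw [polePt_inr, if_pos rfl]
          rw [hf] at h1
          linarith
  · rw [joinInv]; erw [dif_neg h1]
    have hlt : z.1 (.inr false) + z.1 (.inr true) < 1 :=
      lt_of_le_of_ne (zsp_poles_le_one G z) h1
    have hne : 1 - (z.1 (.inr false) + z.1 (.inr true)) ≠ 0 := by
      intro hc; apply h1; linarith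
    apply Subtype.ext
    funext w
    show (joinPt G (ynormPt G z h1) _ _).1 w = z.1 w
    rcases w with x | b
    · rw [joinPt_inl, ynormPt_coe]
      show (1 - (z.1 (.inr false) + z.1 (.inr true))) * _ = _
      rw [mul_comm, div_mul_cancel₀ _ hne]
    · rw [joinPt_inr]
      show (if b = (if z.1 (.inr true) = 0 then false else true) then (1:ℝ) else 0) *
        (z.1 (.inr false) + z.1 (.inr true)) = z.1 (.inr b)
      by_cases ht : z.1 (.inr true) = 0
      · rw [if_pos ht]
        cases b
        · rw [if_pos rfl, ht]; ring
        · rw [if_neg (by simp : ¬ (true = false)), ht]; ring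
      · have hf : z.1 (.inr false) = 0 := by
          rcases zsp_poles_excl G z with h5 | h5
          · exact h5
          · exact absurd h5 ht
        rw [if_neg ht]
        cases b
        · rw [if_neg (by simp : ¬ (false = true)), hf]; ring
        · rw [if_pos rfl, hf]; ring

end Join3

section Join4
variable {V : Type} [Fintype V] [DecidableEq V] (G : SimpleGraph V)

lemma join_left_inv (q : TopJoin (indepComplex G).space Bool) :
    joinInv G (joinToModel G q) = q := by
  induction q using Quot.ind with
  | _ a => ?_
  rcases a with ((⟨y, ε, t⟩) | (y | ε))
  · -- interior points
    show joinInv G (joinPt G y ε t) = _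
    have hzf : (joinPt G y ε t).1 (.inr false) = (if false = ε then (1:ℝ) else 0) * t := rfl
    have hzt : (joinPt G y ε t).1 (.inr true) = (if true = ε then (1:ℝ) else 0) * t := rfl
    cases ε
    · -- pole `false`
      have hf : (joinPt G y false t).1 (.inr false) = (t:ℝ) := by rw [hzf]; norm_num
      have htr : (joinPt G y false t).1 (.inr true) = 0 := by rw [hzt]; norm_num
      by_cases ht1 : (t:ℝ) = 1
      · have hc : (joinPt G y false t).1 (.inr false)
            + (joinPt G y false t).1 (.inr true) = 1 := by
          rw [hf, htr, ht1]; ring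
        rw [joinInv]; erw [dif_pos hc, if_pos htr]
        have : t = (1:I) := Subtype.ext ht1
        rw [this]
        exact (Quot.sound (JoinRel.one y false)).symm
      · have hc : ¬ ((joinPt G y false t).1 (.inr false)
            + (joinPt G y false t).1 (.inr true) = 1) := by
          rw [hf, htr]
          intro hcc
          exact ht1 (by linarith)
        rw [joinInv]; erw [dif_neg hc, if_pos htr]
        have hyn : ynormPt G (joinPt G y false t) hc = y := by
          apply Subtype.ext
          funext x
          rw [ynormPt_coe, hf, htr, joinPt_inl]
          rw [show (t:ℝ) + 0 = (t:ℝ) by ring]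
          rw [mul_comm, mul_div_assoc, div_self (sub_ne_zero.mpr (Ne.symm ht1)), mul_one]
        have htt : (⟨(joinPt G y false t).1 (.inr false) + (joinPt G y false t).1 (.inr true),
            ⟨zsp_pole_sum_nonneg G _, zsp_poles_le_one G _⟩⟩ : I) = t := by
          apply Subtype.ext
          show (joinPt G y false t).1 (.inr false) + (joinPt G y false t).1 (.inr true) = (t:ℝ)
          rw [hf, htr]; ring
        rw [hyn, htt]
    · -- pole `true`
      have hf : (joinPt G y true t).1 (.inr false) = 0 := by rw [hzf]; norm_num
      have htr : (joinPt G y true t).1 (.inr true) = (t:ℝ) := by rw [hzt]; norm_num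
      by_cases ht1 : (t:ℝ) = 1
      · have hc : (joinPt G y true t).1 (.inr false)
            + (joinPt G y true t).1 (.inr true) = 1 := by
          rw [hf, htr, ht1]; ring
        have hne0 : ¬ ((joinPt G y true t).1 (.inr true) = 0) := by
          rw [htr, ht1]; norm_num
        rw [joinInv]; erw [dif_pos hc, if_neg hne0]
        have : t = (1:I) := Subtype.ext ht1
        rw [this]
        exact (Quot.sound (JoinRel.one y true)).symm
      · have hc : ¬ ((joinPt G y true t).1 (.inr false)
            + (joinPt G y true t).1 (.inr true) = 1) := by
          rw [hf, htr]
          intro hcc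
          exact ht1 (by linarith)
        rw [joinInv]; erw [dif_neg hc]
        have hyn : ynormPt G (joinPt G y true t) hc = y := by
          apply Subtype.ext
          funext x
          rw [ynormPt_coe, hf, htr, joinPt_inl]
          rw [show (0:ℝ) + (t:ℝ) = (t:ℝ) by ring]
          rw [mul_comm, mul_div_assoc, div_self (sub_ne_zero.mpr (Ne.symm ht1)), mul_one]
        have htt : (⟨(joinPt G y true t).1 (.inr false) + (joinPt G y true t).1 (.inr true),
            ⟨zsp_pole_sum_nonneg G _, zsp_poles_le_one G _⟩⟩ : I) = t := by
          apply Subtype.ext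
          show (joinPt G y true t).1 (.inr false) + (joinPt G y true t).1 (.inr true) = (t:ℝ)
          rw [hf, htr]; ring
        by_cases ht0 : (joinPt G y true t).1 (.inr true) = 0
        · -- height zero : both descriptions give the equator point
          have ht0' : t = (0:I) := Subtype.ext (by rw [← htr]; exact ht0)
          rw [if_pos ht0, hyn, htt, ht0']
          exact (Quot.sound (JoinRel.zero y false)).trans
            (Quot.sound (JoinRel.zero y true)).symm
        · rw [if_neg ht0, hyn, htt]
  · -- equator points
    show joinInv G (joinPt G y false 0) = _
    have hf : (joinPt G y false 0).1 (.inr false) = 0 := by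
      rw [joinPt_inr]
      norm_num
    have htr : (joinPt G y false 0).1 (.inr true) = 0 := by
      rw [joinPt_inr]
      norm_num
    have hc : ¬ ((joinPt G y false 0).1 (.inr false)
        + (joinPt G y false 0).1 (.inr true) = 1) := by
      rw [hf, htr]; norm_num
    rw [joinInv]; erw [dif_neg hc, if_pos htr]
    have hyn : ynormPt G (joinPt G y false 0) hc = y := by
      apply Subtype.ext
      funext x
      rw [ynormPt_coe, hf, htr, joinPt_inl]
      norm_num
    have htt : (⟨(joinPt G y false 0).1 (.inr false) + (joinPt G y false 0).1 (.inr true),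
        ⟨zsp_pole_sum_nonneg G _, zsp_poles_le_one G _⟩⟩ : I) = (0:I) := by
      apply Subtype.ext
      show (joinPt G y false 0).1 (.inr false) + (joinPt G y false 0).1 (.inr true) = (0:ℝ)
      rw [hf, htr]; ring
    rw [hyn, htt]
    exact Quot.sound (JoinRel.zero y false)
  · -- poles
    show joinInv G (polePt G ε) = _
    cases ε
    · have hc : (polePt G false).1 (.inr false) + (polePt G false).1 (.inr true) = 1 := by
        rw [polePt_inr, polePt_inr]
        norm_num
      have ht0 : (polePt G false).1 (.inr true) = 0 := by
        rw [polePt_inr]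
        norm_num
      rw [joinInv]; erw [dif_pos hc, if_pos ht0]
    · have hc : (polePt G true).1 (.inr false) + (polePt G true).1 (.inr true) = 1 := by
        rw [polePt_inr, polePt_inr]
        norm_num
      have ht0 : ¬ ((polePt G true).1 (.inr true) = 0) := by
        rw [polePt_inr]
        norm_num
      rw [joinInv]; erw [dif_pos hc, if_neg ht0]

instance space_t2 {α : Type*} (K : AbsSimplicialComplex α) : T2Space K.space := by
  unfold AbsSimplicialComplex.space
  infer_instance

instance topJoin_compactSpace (X Y : Type*) [TopologicalSpace X] [TopologicalSpace Y]
    [CompactSpace X] [CompactSpace Y] : CompactSpace (TopJoin X Y) := by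
  unfold TopJoin
  infer_instance

/-- The homeomorphism between the topological join and the suspension model. -/
noncomputable def joinHomeo :
    TopJoin (indepComplex G).space Bool ≃ₜ
      (indepComplex (graphSum G (⊤ : SimpleGraph Bool))).space :=
  Continuous.homeoOfEquivCompactToT2
    (f := ⟨joinToModel G, joinInv G, join_left_inv G, join_right_inv G⟩)
    (joinToModel_continuous G)

end Join4

/-- Csorba: subdividing an edge `uv` of `H` into a path of four edges
yields a graph `G` with `I_G ≃ Σ I_H`. -/
theorem csorba_subdivision {V : Type} [Fintype V] [DecidableEq V]
    (G : SimpleGraph V) (u v : V) (h : G.Adj u v) :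
    Nonempty (ContinuousMap.HomotopyEquiv
      (indepComplex (subdivide4 G u v)).space
      (Susp (indepComplex G).space)) := by
  exact ⟨(mainHE h).trans (joinHomeo G).symm.toHomotopyEquiv⟩
end LineHomotopy
end
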